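/- arXiv:2307.08521 — 4 statements merged into one kernel-verified Lean document; each statement's English description precedes it below -/
import Mathlib

section
/- Let P be a polygonal curve of complexity k in ℝ^d with all edge lengths at most Λ, and let ε > 0. Then there exists a polygonal curve P' of complexity k whose edge lengths are all non-negative integer multiples of ε and are all at most (⌈Λ/ε⌉+1)·ε (i.e., P' is a (⌈Λ/ε⌉+1, ε)-curve), such that the i-th vertex of P' is within distance ε/2 of the i-th vertex of P for every i, and consequently d_F(P,P') ≤ ε/2. -/
open Set Metric Function

noncomputable section

/-- Euclidean space ℝ^d. -/
abbrev Euc (d : ℕ) := EuclideanSpace ℝ (Fin d)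

/-- The polygonal curve (parametrized over `[0,1]`) obtained by concatenating the
segments between consecutive vertices `p 0, p 1, …, p n`. -/
def curveMap {d n : ℕ} (p : Fin (n + 1) → Euc d) (t : ℝ) : Euc d :=
  if h : n = 0 then p 0
  else
    (1 - (t * n - (min ⌊t * (n : ℝ)⌋₊ (n - 1) : ℕ))) • p ⟨min ⌊t * (n : ℝ)⌋₊ (n - 1), by omega⟩
      + (t * n - (min ⌊t * (n : ℝ)⌋₊ (n - 1) : ℕ)) • p ⟨min ⌊t * (n : ℝ)⌋₊ (n - 1) + 1, by omega⟩

/-- A reparametrization: a continuous non-decreasing surjection of `[0,1]` onto itself. -/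
def IsRepar (f : ℝ → ℝ) : Prop :=
  ContinuousOn f (Icc 0 1) ∧ MonotoneOn f (Icc 0 1) ∧ f '' Icc 0 1 = Icc 0 1

/-- The (continuous) Fréchet distance between two curves `[0,1] → ℝ^d`. -/
def frechetDist {d : ℕ} (P Q : ℝ → Euc d) : ℝ :=
  sInf { r : ℝ | ∃ f g : ℝ → ℝ, IsRepar f ∧ IsRepar g ∧
    ∀ t ∈ Icc (0 : ℝ) 1, dist (P (f t)) (Q (g t)) ≤ r }

/-- The edge (segment curve) from `a` to `b`, parametrized over `[0,1]`. -/
def seg {d : ℕ} (a b : Euc d) (t : ℝ) : Euc d := (1 - t) • a + t • b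

/-- The subcurve `P[s,t]` of `P`, reparametrized over `[0,1]`. -/
def subcurve {d : ℕ} (P : ℝ → Euc d) (s t : ℝ) (u : ℝ) : Euc d := P (s + u * (t - s))

/-- All edge lengths of the polygonal curve with vertices `p` are at most `Λ`. -/
def EdgeLenLe {d n : ℕ} (p : Fin (n + 1) → Euc d) (Λ : ℝ) : Prop :=
  ∀ i : Fin n, dist (p i.castSucc) (p i.succ) ≤ Λ

/-- The vertices `p` define a `(μ,ε)`-curve: each edge length is a non-negative integer
multiple of `ε` and is at most `μ·ε`. -/
def IsMuEpsEdges {d n : ℕ} (p : Fin (n + 1) → Euc d) (μ : ℕ) (ε : ℝ) : Prop :=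
  ∀ i : Fin n, (∃ m : ℕ, dist (p i.castSucc) (p i.succ) = m * ε) ∧
    dist (p i.castSucc) (p i.succ) ≤ μ * ε

/-- The `Δ`-neighbourhood of a set `A ⊆ ℝ^d`. -/
def nbhd {d : ℕ} (A : Set (Euc d)) (Δ : ℝ) : Set (Euc d) :=
  { x | ∃ a ∈ A, dist x a ≤ Δ }

/-! ### Auxiliary lemmas -/

/-- Move from `x` towards `y`, travelling a distance which is the nearest multiple of `ε`
to `dist x y`. -/
noncomputable def stepPt {d : ℕ} (ε : ℝ) (x y : Euc d) : Euc d :=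
  x + (((round (dist x y / ε)).toNat * ε) / dist x y) • (y - x)

lemma round_toNat_cast {r : ℝ} (hr : 0 ≤ r) :
    (((round r).toNat : ℕ) : ℝ) = ((round r : ℤ) : ℝ) := by
  have h0 : (0:ℤ) ≤ round r := by
    rw [round_eq]; exact Int.floor_nonneg.2 (by linarith)
  exact_mod_cast Int.toNat_of_nonneg h0

lemma stepPt_dist_left {d : ℕ} {ε : ℝ} (hε : 0 < ε) (x y : Euc d) :
    dist x (stepPt ε x y) = ((round (dist x y / ε)).toNat : ℝ) * ε := by
  rcases eq_or_ne x y with rfl | hxy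
  · simp [stepPt, dist_self, hε.ne']
  · have hL : 0 < dist x y := dist_pos.2 hxy
    have hm : (0:ℝ) ≤ ((round (dist x y / ε)).toNat : ℝ) * ε :=
      mul_nonneg (Nat.cast_nonneg _) hε.le
    rw [stepPt, dist_eq_norm]
    rw [show x - (x + (((round (dist x y / ε)).toNat : ℝ) * ε / dist x y) • (y - x))
        = -((((round (dist x y / ε)).toNat : ℝ) * ε / dist x y) • (y - x)) by abel]
    rw [norm_neg, norm_smul, Real.norm_eq_abs, abs_of_nonneg (div_nonneg hm hL.le),
      ← dist_eq_norm']
    field_simp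

lemma stepPt_dist_right {d : ℕ} {ε : ℝ} (hε : 0 < ε) (x y : Euc d) :
    dist y (stepPt ε x y) ≤ ε / 2 := by
  rcases eq_or_ne x y with rfl | hxy
  · simp [stepPt, dist_self, hε.ne']; positivity
  · have hL : 0 < dist x y := dist_pos.2 hxy
    set L := dist x y with hLdef
    set c : ℝ := ((round (L / ε)).toNat : ℝ) * ε / L with hc
    have h1 : dist y (stepPt ε x y) = |1 - c| * L := by
      rw [stepPt, dist_eq_norm, ← hLdef, ← hc]
      rw [show y - (x + c • (y - x)) = (1 - c) • (y - x) by
        rw [sub_smul, one_smul]; abel]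
      rw [norm_smul, Real.norm_eq_abs, ← dist_eq_norm', ← hLdef]
    have hcast : (((round (L / ε)).toNat : ℕ) : ℝ) = ((round (L / ε) : ℤ) : ℝ) :=
      round_toNat_cast (div_nonneg hL.le hε.le)
    have h2 : |1 - c| * L = |L - ((round (L / ε) : ℤ) : ℝ) * ε| := by
      rw [hc, hcast, show |1 - ((round (L / ε) : ℤ) : ℝ) * ε / L| * L
          = |(1 - ((round (L / ε) : ℤ) : ℝ) * ε / L) * L| by rw [abs_mul, abs_of_pos hL]]
      congr 1
      field_simp
    have h3 : |L - ((round (L / ε) : ℤ) : ℝ) * ε| = |L / ε - ((round (L / ε) : ℤ) : ℝ)| * ε := by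
      rw [show |L / ε - ((round (L / ε) : ℤ) : ℝ)| * ε
          = |(L / ε - ((round (L / ε) : ℤ) : ℝ)) * ε| by rw [abs_mul, abs_of_pos hε]]
      congr 1
      field_simp
    have h4 : |L / ε - ((round (L / ε) : ℤ) : ℝ)| ≤ 1 / 2 := abs_sub_round _
    rw [h1, h2, h3]
    calc |L / ε - ((round (L / ε) : ℤ) : ℝ)| * ε ≤ (1/2) * ε :=
          mul_le_mul_of_nonneg_right h4 hε.le
      _ = ε / 2 := by ring

lemma isRepar_id : IsRepar id :=
  ⟨continuousOn_id, fun _ _ _ _ h => h, image_id _⟩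

lemma curveMap_dist_le {d n : ℕ} (p p' : Fin (n + 1) → Euc d) {r : ℝ}
    (h : ∀ i, dist (p i) (p' i) ≤ r) {t : ℝ} (ht : t ∈ Icc (0:ℝ) 1) :
    dist (curveMap p t) (curveMap p' t) ≤ r := by
  rcases Nat.eq_zero_or_pos n with hn | hn
  · simp only [curveMap, dif_pos hn]; exact h 0
  · have hn' : n ≠ 0 := hn.ne'
    simp only [curveMap, dif_neg hn']
    set j : ℕ := min ⌊t * (n : ℝ)⌋₊ (n - 1) with hj
    set s : ℝ := t * n - (j : ℕ) with hs
    have htn : 0 ≤ t * n := mul_nonneg ht.1 (Nat.cast_nonneg n)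
    have hs0 : 0 ≤ s := by
      have : (j : ℝ) ≤ ⌊t * (n : ℝ)⌋₊ := by exact_mod_cast min_le_left _ _
      have := Nat.floor_le htn
      simp only [hs]; linarith
    have hs1 : s ≤ 1 := by
      rcases le_or_gt ⌊t * (n : ℝ)⌋₊ (n - 1) with hcase | hcase
      · have hje : j = ⌊t * (n : ℝ)⌋₊ := min_eq_left hcase
        have h2 := Nat.lt_floor_add_one (t * (n : ℝ))
        simp only [hs, hje]
        linarith
      · have hje : j = n - 1 := min_eq_right hcase.le
        have h1 : t * n ≤ n := by
          nlinarith [ht.2, Nat.cast_nonneg (α := ℝ) n]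
        have h2 : ((n - 1 : ℕ) : ℝ) = (n : ℝ) - 1 := by
          have : 1 ≤ n := hn; push_cast [this]; ring
        simp only [hs, hje, h2]; linarith
    calc dist ((1 - s) • p ⟨j, by omega⟩ + s • p ⟨j + 1, by omega⟩)
          ((1 - s) • p' ⟨j, by omega⟩ + s • p' ⟨j + 1, by omega⟩)
        ≤ dist ((1 - s) • p ⟨j, by omega⟩) ((1 - s) • p' ⟨j, by omega⟩)
          + dist (s • p ⟨j + 1, by omega⟩) (s • p' ⟨j + 1, by omega⟩) := dist_add_add_le _ _ _ _
      _ = |1 - s| * dist (p ⟨j, by omega⟩) (p' ⟨j, by omega⟩)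
          + |s| * dist (p ⟨j + 1, by omega⟩) (p' ⟨j + 1, by omega⟩) := by
          rw [dist_smul₀, dist_smul₀, Real.norm_eq_abs, Real.norm_eq_abs]
      _ ≤ (1 - s) * r + s * r := by
          rw [abs_of_nonneg (by linarith), abs_of_nonneg hs0]
          exact add_le_add (mul_le_mul_of_nonneg_left (h _) (by linarith)) (mul_le_mul_of_nonneg_left (h _) hs0)
      _ = r := by ring

lemma frechet_le_of_vertices {d n : ℕ} (p p' : Fin (n + 1) → Euc d) {r : ℝ}
    (h : ∀ i, dist (p i) (p' i) ≤ r) :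
    frechetDist (curveMap p) (curveMap p') ≤ r := by
  apply csInf_le
  · refine ⟨0, fun r' hr' => ?_⟩
    obtain ⟨f, g, _, _, hb⟩ := hr'
    exact le_trans dist_nonneg (hb 0 ⟨le_refl 0, zero_le_one⟩)
  · exact ⟨id, id, isRepar_id, isRepar_id, fun t ht => curveMap_dist_le p p' h ht⟩

/-- Lemma 2.6 of the paper. Any polygonal curve with edge lengths at most
`Λ` can be turned into a `(⌈Λ/ε⌉+1, ε)`-curve of the same complexity by moving each vertex
by at most `ε/2`, so that the Fréchet distance between the two curves is at most `ε/2`. -/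
theorem simplification (d n : ℕ) (p : Fin (n + 1) → Euc d) (Λ ε : ℝ) (hε : 0 < ε)
    (hΛ : EdgeLenLe p Λ) :
    ∃ p' : Fin (n + 1) → Euc d,
      (∀ i : Fin n, ∃ m : ℕ, dist (p' i.castSucc) (p' i.succ) = m * ε) ∧
      (∀ i : Fin n, dist (p' i.castSucc) (p' i.succ) ≤ ((⌈Λ / ε⌉₊ + 1 : ℕ)) * ε) ∧
      (∀ i : Fin (n + 1), dist (p i) (p' i) ≤ ε / 2) ∧
      frechetDist (curveMap p) (curveMap p') ≤ ε / 2 := by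
  classical
  -- extend p to ℕ
  set P : ℕ → Euc d := fun i => p ⟨min i n, by omega⟩ with hP
  have hPeq : ∀ k : ℕ, k ≤ n → ∀ (hk : k < n + 1), P k = p ⟨k, hk⟩ := by
    intro k hk hk'
    simp only [hP]
    exact congrArg p (Fin.ext (min_eq_left hk))
  -- the rounded vertices
  set q : ℕ → Euc d := fun i => Nat.rec (p 0) (fun i x => stepPt ε x (P (i + 1))) i with hq
  have hq0 : q 0 = p 0 := rfl
  have hqs : ∀ i : ℕ, q (i + 1) = stepPt ε (q i) (P (i + 1)) := fun i => rfl
  set p' : Fin (n + 1) → Euc d := fun i => q i.val with hp'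
  -- vertex closeness
  have hvert : ∀ i : Fin (n + 1), dist (p i) (p' i) ≤ ε / 2 := by
    intro i
    obtain ⟨iv, hi⟩ := i
    cases iv with
    | zero => simp only [hp', hq0]; simp [dist_self]; positivity
    | succ k =>
      have hPk : P (k + 1) = p ⟨k + 1, hi⟩ := hPeq (k + 1) (by omega) hi
      calc dist (p ⟨k + 1, hi⟩) (p' ⟨k + 1, hi⟩)
          = dist (p ⟨k + 1, hi⟩) (stepPt ε (q k) (P (k + 1))) := rfl
        _ = dist (P (k + 1)) (stepPt ε (q k) (P (k + 1))) := by rw [hPk]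
        _ ≤ ε / 2 := stepPt_dist_right hε _ _
  refine ⟨p', ?_, ?_, hvert, frechet_le_of_vertices p p' hvert⟩
  · intro i
    refine ⟨(round (dist (q i.val) (P (i.val + 1)) / ε)).toNat, ?_⟩
    have : p' i.succ = stepPt ε (q i.val) (P (i.val + 1)) := rfl
    rw [this]
    exact stepPt_dist_left hε _ _
  · intro i
    have hΛ0 : 0 ≤ Λ := le_trans dist_nonneg (hΛ i)
    have hPk : P (i.val + 1) = p i.succ := by
      have := hPeq (i.val + 1) (by omega) (by omega)
      rw [this]; rfl
    have hsucc : p' i.succ = stepPt ε (q i.val) (P (i.val + 1)) := rfl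
    have hcs : p' i.castSucc = q i.val := rfl
    have h1 : dist (p' i.castSucc) (p' i.succ)
        ≤ dist (q i.val) (p i.succ) + ε / 2 := by
      rw [hcs, hsucc]
      calc dist (q i.val) (stepPt ε (q i.val) (P (i.val + 1)))
          ≤ dist (q i.val) (P (i.val + 1))
            + dist (P (i.val + 1)) (stepPt ε (q i.val) (P (i.val + 1))) := dist_triangle _ _ _
        _ ≤ dist (q i.val) (P (i.val + 1)) + ε / 2 := by
            have := stepPt_dist_right hε (q i.val) (P (i.val + 1))
            linarith [this]
        _ = dist (q i.val) (p i.succ) + ε / 2 := by rw [hPk]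
    have h2 : dist (q i.val) (p i.succ)
        ≤ dist (q i.val) (p i.castSucc) + dist (p i.castSucc) (p i.succ) := dist_triangle _ _ _
    have h3 : dist (q i.val) (p i.castSucc) ≤ ε / 2 := by
      rw [dist_comm]
      exact hvert i.castSucc
    have h4 : dist (p i.castSucc) (p i.succ) ≤ Λ := hΛ i
    have h5 : Λ ≤ (⌈Λ / ε⌉₊ : ℝ) * ε := by
      have := Nat.le_ceil (Λ / ε)
      calc Λ = (Λ / ε) * ε := by field_simp
        _ ≤ (⌈Λ / ε⌉₊ : ℝ) * ε := mul_le_mul_of_nonneg_right this hε.le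
    have : ((⌈Λ / ε⌉₊ + 1 : ℕ) : ℝ) * ε = (⌈Λ / ε⌉₊ : ℝ) * ε + ε := by push_cast; ring
    rw [this]
    linarith
end
end

section
/- There is a universal constant C₀ ≥ 1 such that for every polygonal curve P of complexity at most k in ℝ^d, every Δ > 0, every λ > 0, every real c > 1 and every p ∈ ℝ^d, the set N_{Δ/c}(𝓛_{λ,(1+1/c)Δ}(P,p)) can be covered by at most k·(C₀·c)^d closed balls of radius Δ/c. -/
open Set Metric Function

noncomputable section

/-- The locus `L_{λ,Δ}(P,s)` of endpoints of edges of length `λ` that are within Fréchet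
distance `Δ` of some subcurve of `P` starting at parameter `s`. -/
def locusStart {d n : ℕ} (P : Fin (n + 1) → Euc d) (lam Δ s : ℝ) : Set (Euc d) :=
  { q | ∃ p : Euc d, ∃ t ∈ Icc s 1, dist p q = lam ∧
      frechetDist (subcurve (curveMap P) s t) (seg p q) ≤ Δ }

/-- The locus `𝓛_{λ,Δ}(P,p)` of endpoints of edges of length `λ` starting at `p` that are
within Fréchet distance `Δ` of some subcurve of `P`. -/
def locusPoint {d n : ℕ} (P : Fin (n + 1) → Euc d) (lam Δ : ℝ) (p : Euc d) : Set (Euc d) :=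
  { q | dist p q = lam ∧ ∃ s t : ℝ, 0 ≤ s ∧ s ≤ t ∧ t ≤ 1 ∧
      frechetDist (subcurve (curveMap P) s t) (seg p q) ≤ Δ }


/-! ### Auxiliary lemmas -/

section Aux

lemma comb_eq {d : ℕ} (a b : Euc d) (α : ℝ) : (1 - α) • a + α • b = a + α • (b - a) := by
  module

lemma IsRepar.mem {f : ℝ → ℝ} (hf : IsRepar f) {u : ℝ} (hu : u ∈ Icc (0:ℝ) 1) :
    f u ∈ Icc (0:ℝ) 1 := hf.2.2 ▸ mem_image_of_mem f hu

lemma IsRepar.map_zero {f : ℝ → ℝ} (hf : IsRepar f) : f 0 = 0 := by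
  obtain ⟨x₀, hx₀, hfx₀⟩ : (0:ℝ) ∈ f '' Icc 0 1 := by rw [hf.2.2]; exact ⟨le_refl _, zero_le_one⟩
  have h01 : (0:ℝ) ∈ Icc (0:ℝ) 1 := ⟨le_rfl, zero_le_one⟩
  have h1 : f 0 ≤ f x₀ := hf.2.1 h01 hx₀ hx₀.1
  have h2 := (hf.mem h01).1
  rw [hfx₀] at h1; linarith

lemma IsRepar.map_one {f : ℝ → ℝ} (hf : IsRepar f) : f 1 = 1 := by
  obtain ⟨x₀, hx₀, hfx₀⟩ : (1:ℝ) ∈ f '' Icc 0 1 := by rw [hf.2.2]; exact ⟨zero_le_one, le_refl _⟩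
  have h11 : (1:ℝ) ∈ Icc (0:ℝ) 1 := ⟨zero_le_one, le_rfl⟩
  have h1 : f x₀ ≤ f 1 := hf.2.1 hx₀ h11 hx₀.2
  have h2 := (hf.mem h11).2
  rw [hfx₀] at h1; linarith

lemma IsRepar.surj {f : ℝ → ℝ} (hf : IsRepar f) {a : ℝ} (ha : a ∈ Icc (0:ℝ) 1) :
    ∃ u ∈ Icc (0:ℝ) 1, f u = a := by
  obtain ⟨x₀, hx₀, hfx₀⟩ : a ∈ f '' Icc 0 1 := by rw [hf.2.2]; exact ha
  exact ⟨x₀, hx₀, hfx₀⟩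

lemma IsRepar.surj_from {f : ℝ → ℝ} (hf : IsRepar f) {u₀ a : ℝ} (hu₀ : u₀ ∈ Icc (0:ℝ) 1)
    (ha : f u₀ ≤ a) (ha1 : a ≤ 1) : ∃ u₁ ∈ Icc u₀ 1, f u₁ = a := by
  have hsub : Icc u₀ 1 ⊆ Icc (0:ℝ) 1 := Icc_subset_Icc hu₀.1 le_rfl
  have hmem : a ∈ Icc (f u₀) (f 1) := by rw [hf.map_one]; exact ⟨ha, ha1⟩
  obtain ⟨u₁, hu₁, hfu₁⟩ := intermediate_value_Icc hu₀.2 (hf.1.mono hsub) hmem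
  exact ⟨u₁, hu₁, hfu₁⟩

section CM
variable {d n : ℕ} (P : Fin (n + 1) → Euc d)

/-- index of the edge containing parameter `x`. -/
def edgeIx (n : ℕ) (x : ℝ) : ℕ := min ⌊x * (n : ℝ)⌋₊ (n - 1)

lemma edgeIx_le (x : ℝ) : edgeIx n x ≤ n - 1 := min_le_right _ _

lemma edgeIx_mono {x y : ℝ} (hxy : x ≤ y) : edgeIx n x ≤ edgeIx n y :=
  min_le_min (Nat.floor_mono (by nlinarith [Nat.cast_nonneg (α := ℝ) n])) le_rfl

lemma alpha_nonneg {x : ℝ} (hx : 0 ≤ x) : 0 ≤ x * n - (edgeIx n x : ℕ) := by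
  have h1 : (edgeIx n x : ℝ) ≤ (⌊x * (n:ℝ)⌋₊ : ℝ) := by
    exact_mod_cast min_le_left _ _
  have h2 : (⌊x * (n:ℝ)⌋₊ : ℝ) ≤ x * n := Nat.floor_le (by positivity)
  linarith

lemma alpha_le_one {x : ℝ} (hx : x ≤ 1) (hn : n ≠ 0) : x * n - (edgeIx n x : ℕ) ≤ 1 := by
  rcases le_or_gt (⌊x * (n:ℝ)⌋₊) (n-1) with h | h
  · have he : edgeIx n x = ⌊x * (n:ℝ)⌋₊ := min_eq_left h
    rw [he]
    linarith [Nat.lt_floor_add_one (x * (n:ℝ))]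
  · have he : edgeIx n x = n - 1 := min_eq_right (le_of_lt h)
    rw [he]
    have hx2 : x * n ≤ n := by nlinarith [Nat.cast_nonneg (α := ℝ) n]
    have hcast : ((n - 1 : ℕ) : ℝ) = (n:ℝ) - 1 := by
      have h1n : (1:ℕ) ≤ n := Nat.one_le_iff_ne_zero.2 hn
      push_cast [Nat.cast_sub h1n]; ring
    rw [hcast]; linarith

lemma curveMap_eq (hn : n ≠ 0) (x : ℝ) :
    curveMap P x = P ⟨edgeIx n x, by have := edgeIx_le (n := n) x; omega⟩
      + (x * n - (edgeIx n x : ℕ)) •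
        (P ⟨edgeIx n x + 1, by have := edgeIx_le (n := n) x; omega⟩
          - P ⟨edgeIx n x, by have := edgeIx_le (n := n) x; omega⟩) := by
  rw [curveMap, dif_neg hn]
  exact comb_eq _ _ _

lemma curveMap_eq' (hn : n ≠ 0) (x : ℝ) {m : ℕ} (hm : m < n) (hix : edgeIx n x = m) :
    curveMap P x = P ⟨m, by omega⟩
      + (x * n - (m : ℕ)) • (P ⟨m + 1, by omega⟩ - P ⟨m, by omega⟩) := by
  subst hix
  exact curveMap_eq P hn x

lemma curveMap_zero_n (hn : n = 0) (x : ℝ) : curveMap P x = P 0 := by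
  rw [curveMap, dif_pos hn]

lemma curveMap_nat (hn : n ≠ 0) (m : ℕ) (hm : m < n) :
    curveMap P ((m : ℝ) / n) = P ⟨m, by omega⟩ := by
  have hn' : (n:ℝ) ≠ 0 := Nat.cast_ne_zero.2 hn
  have hx : (m:ℝ)/n * n = m := div_mul_cancel₀ _ hn'
  have hfloor : ⌊(m:ℝ)/n * n⌋₊ = m := by rw [hx, Nat.floor_natCast]
  have hix : edgeIx n ((m:ℝ)/n) = m := by
    rw [edgeIx, hfloor]; exact min_eq_left (by omega)
  rw [curveMap_eq P hn]
  have hα : ((m:ℝ)/n * n - ((edgeIx n ((m:ℝ)/n) : ℕ) : ℝ)) = 0 := by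
    rw [hx, hix]; exact sub_self _
  rw [hα, zero_smul, add_zero]
  exact congrArg P (Fin.ext hix)

lemma norm_curveMap_le {x : ℝ} (hx : x ∈ Icc (0:ℝ) 1) :
    ‖curveMap P x‖ ≤ 3 * ∑ i, ‖P i‖ := by
  have hnn : ∀ i, ‖P i‖ ≤ ∑ j, ‖P j‖ := fun i =>
    Finset.single_le_sum (fun j _ => norm_nonneg (P j)) (Finset.mem_univ i)
  have hs : 0 ≤ ∑ j, ‖P j‖ := Finset.sum_nonneg fun j _ => norm_nonneg _
  by_cases hn : n = 0
  · rw [curveMap_zero_n P hn]; linarith [hnn 0]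
  · rw [curveMap_eq P hn]
    set α := x * n - ((edgeIx n x : ℕ) : ℝ) with hα
    have h0 : 0 ≤ α := alpha_nonneg hx.1
    have h1 : α ≤ 1 := alpha_le_one hx.2 hn
    calc ‖_ + α • (_ - _)‖ ≤ ‖(_ : Euc d)‖ + α * ‖(_ : Euc d) - (_ : Euc d)‖ := by
          rw [← norm_smul_of_nonneg h0]; exact norm_add_le _ _
      _ ≤ _ := by
          have ht := norm_sub_le (P ⟨edgeIx n x + 1, by have := edgeIx_le (n := n) x; omega⟩)
            (P ⟨edgeIx n x, by have := edgeIx_le (n := n) x; omega⟩)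
          have h2 := hnn ⟨edgeIx n x + 1, by have := edgeIx_le (n := n) x; omega⟩
          have h3 := hnn (⟨edgeIx n x, by have := edgeIx_le (n := n) x; omega⟩ : Fin (n+1))
          nlinarith [norm_nonneg (P ⟨edgeIx n x + 1, by have := edgeIx_le (n := n) x; omega⟩
            - P ⟨edgeIx n x, by have := edgeIx_le (n := n) x; omega⟩)]
end CM

lemma norm_seg_le {d : ℕ} (p q : Euc d) {u : ℝ} (hu : u ∈ Icc (0:ℝ) 1) :
    ‖seg p q u‖ ≤ ‖p‖ + ‖q‖ := by
  calc ‖(1-u) • p + u • q‖ ≤ ‖(1-u) • p‖ + ‖u • q‖ := norm_add_le _ _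
    _ = (1-u) * ‖p‖ + u * ‖q‖ := by
        rw [norm_smul_of_nonneg (by linarith [hu.2]), norm_smul_of_nonneg hu.1]
    _ ≤ ‖p‖ + ‖q‖ := by nlinarith [norm_nonneg p, norm_nonneg q, hu.1, hu.2]

lemma subcurve_param_mem {s t u : ℝ} (hs : 0 ≤ s) (hst : s ≤ t) (ht : t ≤ 1)
    (hu : u ∈ Icc (0:ℝ) 1) : s + u * (t - s) ∈ Icc (0:ℝ) 1 := by
  constructor
  · nlinarith [hu.1, hu.2]
  · nlinarith [hu.1, hu.2]

lemma frechet_extract {d n : ℕ} (P : Fin (n + 1) → Euc d) {s t : ℝ} (hs : 0 ≤ s) (hst : s ≤ t)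
    (ht : t ≤ 1) (p q : Euc d) {D' D : ℝ}
    (h : frechetDist (subcurve (curveMap P) s t) (seg p q) ≤ D') (hDD : D' < D) :
    ∃ f g : ℝ → ℝ, IsRepar f ∧ IsRepar g ∧
      ∀ τ ∈ Icc (0:ℝ) 1, dist (curveMap P (s + f τ * (t - s))) (seg p q (g τ)) ≤ D := by
  set S := { r : ℝ | ∃ f g : ℝ → ℝ, IsRepar f ∧ IsRepar g ∧
    ∀ τ ∈ Icc (0 : ℝ) 1, dist (subcurve (curveMap P) s t (f τ)) (seg p q (g τ)) ≤ r } with hS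
  have hne : S.Nonempty := by
    refine ⟨3 * ∑ i, ‖P i‖ + (‖p‖ + ‖q‖), id, id, isRepar_id, isRepar_id, fun τ hτ => ?_⟩
    calc dist (subcurve (curveMap P) s t τ) (seg p q τ)
        ≤ ‖subcurve (curveMap P) s t τ‖ + ‖seg p q τ‖ := by
          rw [dist_eq_norm]; exact norm_sub_le _ _
      _ ≤ 3 * ∑ i, ‖P i‖ + (‖p‖ + ‖q‖) :=
          add_le_add (norm_curveMap_le P (subcurve_param_mem hs hst ht hτ)) (norm_seg_le p q hτ)
  have hlt : sInf S < D := lt_of_le_of_lt h hDD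
  obtain ⟨r, hrS, hrD⟩ := exists_lt_of_csInf_lt hne hlt
  obtain ⟨f, g, hf, hg, hfg⟩ := hrS
  exact ⟨f, g, hf, hg, fun τ hτ => (hfg τ hτ).trans hrD.le⟩

lemma dist_seg_right {d : ℕ} (p q : Euc d) {u : ℝ} (hu : u ≤ 1) :
    dist (seg p q u) q = (1 - u) * dist p q := by
  rw [seg, dist_eq_norm, dist_eq_norm]
  have he : (1-u) • p + u • q - q = (1-u) • (p - q) := by module
  rw [he, norm_smul, Real.norm_eq_abs, abs_of_nonneg (by linarith)]

lemma scalar_bound (a b u₁ u₂ lam D : ℝ) (hD : 0 < D) (hlam : 10 * D < lam)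
    (h1 : lam - D ≤ a) (h2 : a ≤ lam + D) (h3 : lam - D ≤ b) (h4 : b ≤ lam + D)
    (h5 : lam / 2 - D ≤ u₁) (h6 : lam / 2 - D ≤ u₂)
    (hsq : u₁ ^ 2 - u₂ ^ 2 = a ^ 2 - b ^ 2) : |u₁ - u₂| ≤ 5 * D := by
  have ha0 : 0 ≤ a := by linarith
  have hb0 : 0 ≤ b := by linarith
  have hup : a ^ 2 - b ^ 2 ≤ 4 * lam * D := by nlinarith
  have hdn : -(4 * lam * D) ≤ a ^ 2 - b ^ 2 := by nlinarith
  have hsum : lam - 2 * D ≤ u₁ + u₂ := by linarith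
  rw [abs_le]
  constructor <;> nlinarith [hsq, hsum, hup, hdn]

lemma edge_class_diam {d : ℕ} (p A v q₁ q₂ : Euc d) (lam D : ℝ) (hD : 0 < D)
    (hlam : 10 * D < lam)
    (hq₁ : dist p q₁ = lam) (hq₂ : dist p q₂ = lam) (β₁ β₂ : ℝ)
    (hx₁ : dist q₁ (A + β₁ • v) ≤ D) (hx₂ : dist q₂ (A + β₂ • v) ≤ D)
    (ha₁ : lam / 2 * ‖v‖ ≤ (inner ℝ (q₁ - p) v : ℝ))
    (ha₂ : lam / 2 * ‖v‖ ≤ (inner ℝ (q₂ - p) v : ℝ)) :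
    dist q₁ q₂ ≤ 7 * D := by
  by_cases hv : v = 0
  · subst hv
    simp only [smul_zero, add_zero] at hx₁ hx₂
    calc dist q₁ q₂ ≤ dist q₁ A + dist A q₂ := dist_triangle _ _ _
      _ ≤ 7 * D := by rw [dist_comm A q₂]; linarith
  · have hvpos : 0 < ‖v‖ := norm_pos_iff.2 hv
    set V : Euc d := ‖v‖⁻¹ • v with hVdef
    have hVnorm : ‖V‖ = 1 := norm_smul_inv_norm hv
    set x₁ := A + β₁ • v with hx₁def
    set x₂ := A + β₂ • v with hx₂def
    set u₁ : ℝ := inner ℝ (x₁ - p) V with hu₁def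
    set u₂ : ℝ := inner ℝ (x₂ - p) V with hu₂def
    have hn₁ : ‖q₁ - p‖ = lam := by rw [← dist_eq_norm, dist_comm]; exact hq₁
    have hn₂ : ‖q₂ - p‖ = lam := by rw [← dist_eq_norm, dist_comm]; exact hq₂
    have hxq₁ : ‖q₁ - x₁‖ ≤ D := by rw [← dist_eq_norm]; exact hx₁
    have hxq₂ : ‖q₂ - x₂‖ ≤ D := by rw [← dist_eq_norm]; exact hx₂
    have key : ∀ (q x : Euc d), ‖q - p‖ = lam → ‖q - x‖ ≤ D →
        lam / 2 * ‖v‖ ≤ (inner ℝ (q - p) v : ℝ) →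
        lam - D ≤ ‖x - p‖ ∧ ‖x - p‖ ≤ lam + D ∧ lam / 2 - D ≤ (inner ℝ (x - p) V : ℝ) := by
      intro q x hn hqx ha
      have e1 : x - p = (q - p) - (q - x) := by abel
      have hhi : ‖x - p‖ ≤ lam + D := by
        rw [e1]
        calc ‖(q - p) - (q - x)‖ ≤ ‖q - p‖ + ‖q - x‖ := norm_sub_le _ _
          _ ≤ lam + D := by rw [hn]; linarith
      have hlo : lam - D ≤ ‖x - p‖ := by
        have h9 : ‖q - p‖ ≤ ‖q - x‖ + ‖x - p‖ := by
          have e2 : q - p = (q - x) + (x - p) := by abel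
          rw [e2]; exact norm_add_le _ _
        rw [hn] at h9; linarith
      refine ⟨hlo, hhi, ?_⟩
      have i1 : (inner ℝ (q - p) V : ℝ) = ‖v‖⁻¹ * inner ℝ (q - p) v :=
        real_inner_smul_right _ _ _
      have i2 : lam / 2 ≤ (inner ℝ (q - p) V : ℝ) := by
        rw [i1]
        calc lam / 2 = ‖v‖⁻¹ * (lam / 2 * ‖v‖) := by field_simp
          _ ≤ ‖v‖⁻¹ * inner ℝ (q - p) v :=
              mul_le_mul_of_nonneg_left ha (by positivity)
      have i3 : (inner ℝ (x - p) V : ℝ) = inner ℝ (q - p) V + (inner ℝ (x - q) V : ℝ) := by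
        rw [← inner_add_left]
        congr 1
        abel
      have i4 : -D ≤ (inner ℝ (x - q) V : ℝ) := by
        have h10 := abs_real_inner_le_norm (x - q) V
        rw [hVnorm, mul_one] at h10
        have h5 : ‖x - q‖ ≤ D := by rw [norm_sub_rev]; exact hqx
        have h11 := abs_le.1 h10
        linarith [h11.1]
      rw [i3]; linarith
    obtain ⟨hlo₁, hhi₁, hu₁⟩ := key q₁ x₁ hn₁ hxq₁ ha₁
    obtain ⟨hlo₂, hhi₂, hu₂⟩ := key q₂ x₂ hn₂ hxq₂ ha₂
    rw [← hu₁def] at hu₁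
    rw [← hu₂def] at hu₂
    have hx12 : x₁ - x₂ = (β₁ - β₂) • v := by rw [hx₁def, hx₂def]; module
    have hinnvV : (inner ℝ v V : ℝ) = ‖v‖ := by
      rw [hVdef, real_inner_smul_right, real_inner_self_eq_norm_sq]
      field_simp
    have hud : u₁ - u₂ = (β₁ - β₂) * ‖v‖ := by
      rw [hu₁def, hu₂def, ← inner_sub_left]
      have e3 : x₁ - p - (x₂ - p) = x₁ - x₂ := by abel
      rw [e3, hx12, real_inner_smul_left, hinnvV]
    have hxnorm : ‖x₁ - x₂‖ = |u₁ - u₂| := by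
      rw [hx12, norm_smul, Real.norm_eq_abs, hud, abs_mul, abs_of_pos hvpos]
    have hperp : x₁ - p - u₁ • V = x₂ - p - u₂ • V := by
      have h6 : (u₁ - u₂) • V = x₁ - x₂ := by
        rw [hud, hVdef, smul_smul, hx12]
        congr 1
        field_simp
      rw [sub_smul] at h6
      have h8 : x₁ - p - u₁ • V - (x₂ - p - u₂ • V) = (x₁ - x₂) - (u₁ • V - u₂ • V) := by
        abel
      rw [h6, sub_self] at h8
      exact sub_eq_zero.1 h8
    have hpyth : ∀ (x : Euc d) (u : ℝ), u = (inner ℝ (x - p) V : ℝ) →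
        ‖x - p - u • V‖ ^ 2 = ‖x - p‖ ^ 2 - u ^ 2 := by
      intro x u hu
      rw [norm_sub_sq_real, real_inner_smul_right, ← hu, norm_smul, Real.norm_eq_abs, hVnorm,
        mul_one, sq_abs]
      ring
    have hsq : u₁ ^ 2 - u₂ ^ 2 = ‖x₁ - p‖ ^ 2 - ‖x₂ - p‖ ^ 2 := by
      have e4 := hpyth x₁ u₁ hu₁def
      have e5 := hpyth x₂ u₂ hu₂def
      rw [hperp] at e4
      rw [e4] at e5
      linarith
    have habs : |u₁ - u₂| ≤ 5 * D :=
      scalar_bound _ _ _ _ _ _ hD hlam hlo₁ hhi₁ hlo₂ hhi₂ hu₁ hu₂ hsq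
    calc dist q₁ q₂ ≤ dist q₁ x₁ + dist x₁ x₂ + dist x₂ q₂ := dist_triangle4 _ _ _ _
      _ ≤ D + 5 * D + D := by
          have d1 : dist x₁ x₂ = ‖x₁ - x₂‖ := dist_eq_norm _ _
          have d2 : dist x₂ q₂ = ‖q₂ - x₂‖ := by rw [dist_comm, dist_eq_norm]
          rw [d1, d2, hxnorm]
          exact add_le_add (add_le_add hx₁ habs) hxq₂
      _ = 7 * D := by ring

open MeasureTheory in
lemma packing_bound {d : ℕ} (S : Finset (Euc d)) (ρ R : ℝ) (hρ : 0 < ρ) (hR : 0 ≤ R)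
    (hdiam : ∀ x ∈ S, ∀ y ∈ S, dist x y ≤ R)
    (hsep : ∀ x ∈ S, ∀ y ∈ S, x ≠ y → ρ < dist x y) :
    (S.card : ℝ) ≤ (2 * R / ρ + 1) ^ d := by
  rcases S.eq_empty_or_nonempty with rfl | ⟨x₀, hx₀⟩
  · simp only [Finset.card_empty, Nat.cast_zero]
    positivity
  have hhalf : (0:ℝ) ≤ ρ/2 := by linarith
  have hdisj : (S : Set (Euc d)).Pairwise (Disjoint on fun x => closedBall x (ρ/2)) := by
    intro x hx y hy hxy
    exact closedBall_disjoint_closedBall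
      (by simpa using (hsep x hx y hy hxy).trans_le' (by linarith))
  have hsum : ∑ x ∈ S, volume (closedBall x (ρ/2)) ≤ volume (closedBall x₀ (R + ρ/2)) := by
    rw [← measure_biUnion_finset hdisj (fun x _ => measurableSet_closedBall)]
    refine measure_mono (iUnion₂_subset fun x hx => closedBall_subset_closedBall' ?_)
    have := hdiam x hx x₀ hx₀; linarith
  have hvol : ∀ (x : Euc d) (r : ℝ), 0 ≤ r → volume (closedBall x r)
      = ENNReal.ofReal (r ^ d) * volume (closedBall (0 : Euc d) 1) := by
    intro x r hr
    rw [Measure.addHaar_closedBall' volume x hr, finrank_euclideanSpace_fin]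
  set U := volume (closedBall (0 : Euc d) 1) with hU
  have hU0 : U ≠ 0 := (measure_closedBall_pos volume _ one_pos).ne'
  have hUtop : U ≠ ⊤ := measure_closedBall_lt_top.ne
  rw [Finset.sum_congr rfl (fun x _ => hvol x _ hhalf), Finset.sum_const,
    hvol _ _ (by linarith : (0:ℝ) ≤ R + ρ/2), nsmul_eq_mul, ← mul_assoc,
    ENNReal.mul_le_mul_iff_left hU0 hUtop] at hsum
  rw [← ENNReal.ofReal_natCast S.card, ← ENNReal.ofReal_mul (by positivity)] at hsum
  have hreal : (S.card : ℝ) * (ρ/2)^d ≤ (R + ρ/2)^d :=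
    (ENNReal.ofReal_le_ofReal_iff (by positivity)).1 hsum
  have hpow : (0:ℝ) < (ρ/2)^d := by positivity
  rw [← le_div_iff₀ hpow] at hreal
  refine hreal.trans ?_
  rw [div_le_iff₀ hpow, ← mul_pow]
  gcongr
  rw [div_add' _ _ _ (by positivity), div_mul_eq_mul_div, le_div_iff₀ hρ]
  ring_nf
  nlinarith

/-- The classes covering the locus: a small ball around `p`, balls around vertices,
and for each edge the set of aligned locus points near the edge line. -/
def clsSet {d n : ℕ} (P : Fin (n + 1) → Euc d) (p : Euc d) (lam D : ℝ) :
    Option (Fin (n + 1) ⊕ Fin n) → Set (Euc d)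
  | none => closedBall p (10 * D)
  | some (Sum.inl j) => closedBall (P j) (9 * D)
  | some (Sum.inr j) => {q | dist p q = lam ∧ 10 * D < lam ∧ ∃ β : ℝ,
      dist q (P j.castSucc + β • (P j.succ - P j.castSucc)) ≤ D ∧
      lam / 2 * ‖P j.succ - P j.castSucc‖ ≤
        (inner ℝ (q - p) (P j.succ - P j.castSucc) : ℝ)}

lemma clsSet_diam {d n : ℕ} (P : Fin (n + 1) → Euc d) (p : Euc d) (lam D : ℝ) (hD : 0 < D) :
    ∀ (i : Option (Fin (n + 1) ⊕ Fin n)), ∀ q₁ ∈ clsSet P p lam D i, ∀ q₂ ∈ clsSet P p lam D i,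
      dist q₁ q₂ ≤ 20 * D := by
  rintro (_ | j | j) q₁ h₁ q₂ h₂
  · simp only [clsSet, mem_closedBall] at h₁ h₂
    calc dist q₁ q₂ ≤ dist q₁ p + dist p q₂ := dist_triangle _ _ _
      _ ≤ 20 * D := by rw [dist_comm p q₂]; linarith
  · simp only [clsSet, mem_closedBall] at h₁ h₂
    calc dist q₁ q₂ ≤ dist q₁ (P j) + dist (P j) q₂ := dist_triangle _ _ _
      _ ≤ 20 * D := by rw [dist_comm (P j) q₂]; linarith
  · obtain ⟨hd₁, hlam, β₁, hx₁, ha₁⟩ := h₁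
    obtain ⟨hd₂, -, β₂, hx₂, ha₂⟩ := h₂
    have := edge_class_diam p (P j.castSucc) (P j.succ - P j.castSucc) q₁ q₂ lam D hD hlam
      hd₁ hd₂ β₁ β₂ hx₁ hx₂ ha₁ ha₂
    linarith

set_option maxHeartbeats 2000000 in
lemma locus_subset_cls {d n : ℕ} (P : Fin (n + 1) → Euc d) (p : Euc d) (Δ lam c : ℝ)
    (hΔ : 0 < Δ) (hlam : 0 < lam) (hc : 1 < c) :
    locusPoint P lam ((1 + 1 / c) * Δ) p ⊆ ⋃ i, clsSet P p lam (2 * Δ) i := by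
  intro q hq
  obtain ⟨hdist, s, t, hs0, hst, ht1, hF⟩ := hq
  set D := 2 * Δ with hDdef
  have hD : 0 < D := by linarith
  rw [mem_iUnion]
  by_cases hsmall : lam ≤ 10 * D
  · refine ⟨none, ?_⟩
    simp only [clsSet, mem_closedBall, dist_comm q p, hdist]
    exact hsmall
  push_neg at hsmall
  have hlt : (1 + 1 / c) * Δ < D := by
    have h1c : 1 / c < 1 := by rw [div_lt_one (by linarith)]; exact hc
    nlinarith
  obtain ⟨f, g, hf, hg, hm⟩ := frechet_extract P hs0 hst ht1 p q hF hlt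
  have h1mem : (1:ℝ) ∈ Icc (0:ℝ) 1 := ⟨zero_le_one, le_rfl⟩
  have hseg1 : seg p q 1 = q := by simp [seg]
  have hend : dist (curveMap P t) q ≤ D := by
    have h := hm 1 h1mem
    rw [hf.map_one, hg.map_one, hseg1] at h
    have e1 : s + 1 * (t - s) = t := by ring
    rw [e1] at h
    exact h
  by_cases hn : n = 0
  · refine ⟨some (Sum.inl ⟨0, by omega⟩), ?_⟩
    simp only [clsSet, mem_closedBall]
    have he : curveMap P t = P ⟨0, by omega⟩ := by
      rw [curveMap_zero_n P hn t]
      rfl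
    rw [he, dist_comm] at hend
    linarith
  -- main case : n ≠ 0, lam > 10 D
  set u₀ : ℝ := 1 - 8 * D / lam with hu₀def
  have h8pos : 0 < 8 * D / lam := by positivity
  have h8lt : 8 * D / lam < 1 := by rw [div_lt_one hlam]; linarith
  have hu₀mem : u₀ ∈ Icc (0:ℝ) 1 := ⟨by rw [hu₀def]; linarith, by rw [hu₀def]; linarith⟩
  obtain ⟨τ₀, hτ₀, hgτ₀⟩ := hg.surj hu₀mem
  set y := s + f τ₀ * (t - s) with hydef
  have hfτ₀ := hf.mem hτ₀
  have hys : s ≤ y := by nlinarith [hfτ₀.1, hfτ₀.2]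
  have hyt : y ≤ t := by nlinarith [hfτ₀.1, hfτ₀.2]
  have hy0 : 0 ≤ y := le_trans hs0 hys
  have hw : dist (curveMap P y) (seg p q u₀) ≤ D := by
    have h := hm τ₀ hτ₀
    rw [hgτ₀] at h
    exact h
  have hjle : edgeIx n y ≤ edgeIx n t := edgeIx_mono hyt
  have hjn : edgeIx n t ≤ n - 1 := edgeIx_le t
  have hjn' : edgeIx n t < n := by omega
  set j := edgeIx n t with hjdef
  have hnpos : (0:ℝ) < n := by exact_mod_cast Nat.pos_of_ne_zero hn
  rcases lt_or_eq_of_le hjle with hcase | hcase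
  · -- vertex case : a vertex of P lies between the parameters y and t
    have hfly : ⌊y * (n:ℝ)⌋₊ = edgeIx n y := by
      rcases le_or_gt ⌊y * (n:ℝ)⌋₊ (n-1) with h | h
      · exact (min_eq_left h).symm
      · exfalso
        have : edgeIx n y = n - 1 := min_eq_right h.le
        omega
    have hynj : y * n < j := by
      have h1 : y * (n:ℝ) < ⌊y * (n:ℝ)⌋₊ + 1 := Nat.lt_floor_add_one _
      have h2 : (⌊y * (n:ℝ)⌋₊ : ℝ) + 1 ≤ j := by
        have : ⌊y * (n:ℝ)⌋₊ + 1 ≤ j := by omega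
        exact_mod_cast this
      linarith
    have hjt : (j:ℝ)/n ≤ t := by
      rw [div_le_iff₀ hnpos]
      calc (j:ℝ) ≤ (⌊t * (n:ℝ)⌋₊ : ℝ) := by exact_mod_cast min_le_left _ _
        _ ≤ t * n := Nat.floor_le (by nlinarith)
    have hyj : y < (j:ℝ)/n := by rw [lt_div_iff₀ hnpos]; linarith
    have hslt : s < t := lt_of_le_of_lt hys (lt_of_lt_of_le hyj hjt)
    have htsne : t - s ≠ 0 := by linarith
    set σ' : ℝ := ((j:ℝ)/n - s)/(t - s) with hσ'def
    have hσ'le : σ' ≤ 1 := by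
      rw [hσ'def, div_le_one (by linarith)]
      linarith
    have hσ'ge : f τ₀ ≤ σ' := by
      rw [hσ'def, le_div_iff₀ (by linarith)]
      linarith
    have hparam : s + σ' * (t - s) = (j:ℝ)/n := by
      rw [hσ'def]
      field_simp
      ring
    obtain ⟨τ₁, hτ₁, hfτ₁⟩ := hf.surj_from hτ₀ hσ'ge hσ'le
    have hτ₁mem : τ₁ ∈ Icc (0:ℝ) 1 := ⟨le_trans hτ₀.1 hτ₁.1, hτ₁.2⟩
    have hvd : dist (P ⟨j, by omega⟩) (seg p q (g τ₁)) ≤ D := by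
      have h := hm τ₁ hτ₁mem
      rw [hfτ₁, hparam, curveMap_nat P hn j hjn'] at h
      exact h
    have hgm : u₀ ≤ g τ₁ := by
      rw [← hgτ₀]
      exact hg.2.1 hτ₀ hτ₁mem hτ₁.1
    have hg1 : g τ₁ ≤ 1 := (hg.mem hτ₁mem).2
    have hdq : dist (seg p q (g τ₁)) q ≤ 8 * D := by
      rw [dist_seg_right p q hg1, hdist]
      have h1 : 1 - g τ₁ ≤ 8 * D / lam := by rw [hu₀def] at hgm; linarith
      calc (1 - g τ₁) * lam ≤ (8 * D / lam) * lam := mul_le_mul_of_nonneg_right h1 hlam.le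
        _ = 8 * D := by field_simp
    refine ⟨some (Sum.inl ⟨j, by omega⟩), ?_⟩
    simp only [clsSet, mem_closedBall]
    calc dist q (P ⟨j, by omega⟩)
        ≤ dist q (seg p q (g τ₁)) + dist (seg p q (g τ₁)) (P ⟨j, by omega⟩) :=
          dist_triangle _ _ _
      _ ≤ 9 * D := by
          rw [dist_comm q (seg p q (g τ₁)), dist_comm (seg p q (g τ₁)) (P ⟨j, by omega⟩)]
          linarith
  · -- edge case
    set je : Fin n := ⟨j, hjn'⟩ with hjedef
    set v : Euc d := P je.succ - P je.castSucc with hvdef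
    have hcs : je.castSucc = (⟨j, by omega⟩ : Fin (n+1)) := rfl
    have hsc : je.succ = (⟨j + 1, by omega⟩ : Fin (n+1)) := rfl
    have hx_eq : curveMap P t = P je.castSucc + (t * n - (j:ℝ)) • v := by
      rw [curveMap_eq' P hn t hjn' hjdef.symm, hvdef, hcs, hsc]
    have hz_eq : curveMap P y = P je.castSucc + (y * n - (j:ℝ)) • v := by
      rw [curveMap_eq' P hn y hjn' hcase, hvdef, hcs, hsc]
    set β : ℝ := t * n - (j:ℝ) with hβdef
    set α' : ℝ := y * n - (j:ℝ) with hα'def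
    have hβα : α' ≤ β := by
      rw [hβdef, hα'def]
      have hmul := mul_le_mul_of_nonneg_right hyt hnpos.le
      linarith
    set w := seg p q u₀ with hwdef
    set x := curveMap P t with hxdef
    set z := curveMap P y with hzdef
    clear_value w x z
    have hqw : q - w = (8 * D / lam) • (q - p) := by
      rw [hwdef, seg]
      have e : q - ((1 - u₀) • p + u₀ • q) = (1 - u₀) • (q - p) := by module
      rw [e, hu₀def]
      congr 1
      ring
    have hqpnorm : ‖q - p‖ = lam := by rw [← dist_eq_norm, dist_comm]; exact hdist
    have hqwnorm : ‖q - w‖ = 8 * D := by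
      rw [hqw, norm_smul, Real.norm_eq_abs, abs_of_pos h8pos, hqpnorm]
      field_simp
    have hxz : x - z = (β - α') • v := by
      rw [hx_eq, hz_eq]
      module
    have herr : ‖(x - z) - (q - w)‖ ≤ 2 * D := by
      have e : (x - z) - (q - w) = (x - q) + (w - z) := by abel
      rw [e]
      have h1 : ‖x - q‖ ≤ D := by rw [← dist_eq_norm]; exact hend
      have h2 : ‖w - z‖ ≤ D := by
        rw [← dist_eq_norm, dist_comm]
        exact hw
      calc ‖(x - q) + (w - z)‖ ≤ ‖x - q‖ + ‖w - z‖ := norm_add_le _ _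
        _ ≤ 2 * D := by linarith
    have hxzge : 6 * D ≤ ‖x - z‖ := by
      have e : q - w = (x - z) + ((q - w) - (x - z)) := by abel
      have h1 : ‖q - w‖ ≤ ‖x - z‖ + ‖(q - w) - (x - z)‖ := by
        calc ‖q - w‖ = ‖(x - z) + ((q - w) - (x - z))‖ := by rw [← e]
          _ ≤ ‖x - z‖ + ‖(q - w) - (x - z)‖ := norm_add_le _ _
      rw [norm_sub_rev] at herr
      rw [hqwnorm] at h1
      linarith [herr, h1]
    have hxznorm : ‖x - z‖ = (β - α') * ‖v‖ := by
      rw [hxz, norm_smul, Real.norm_eq_abs, abs_of_nonneg (by linarith)]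
    have hinner_xz : (inner ℝ (x - z) v : ℝ) = ((β - α') * ‖v‖) * ‖v‖ := by
      rw [hxz, real_inner_smul_left, real_inner_self_eq_norm_sq]
      ring
    have hinner_err : (inner ℝ ((x - z) - (q - w)) v : ℝ) ≤ 2 * D * ‖v‖ := by
      calc (inner ℝ ((x - z) - (q - w)) v : ℝ) ≤ ‖(x - z) - (q - w)‖ * ‖v‖ :=
            real_inner_le_norm _ _
        _ ≤ 2 * D * ‖v‖ := mul_le_mul_of_nonneg_right herr (norm_nonneg _)
    have hinner_qw : 4 * D * ‖v‖ ≤ (inner ℝ (q - w) v : ℝ) := by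
      have e : (inner ℝ (q - w) v : ℝ) = inner ℝ (x - z) v - (inner ℝ ((x - z) - (q - w)) v : ℝ) := by
        rw [← inner_sub_left]
        congr 1
        abel
      rw [e, hinner_xz]
      rw [hxznorm] at hxzge
      nlinarith [norm_nonneg v, hxzge, hinner_err]
    have halign : lam / 2 * ‖v‖ ≤ (inner ℝ (q - p) v : ℝ) := by
      have e : (inner ℝ (q - w) v : ℝ) = (8 * D / lam) * inner ℝ (q - p) v := by
        rw [hqw, real_inner_smul_left]
      rw [e] at hinner_qw
      have hmul := mul_le_mul_of_nonneg_left hinner_qw hlam.le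
      have e2 : lam * ((8 * D / lam) * (inner ℝ (q - p) v : ℝ)) = 8 * D * inner ℝ (q - p) v := by
        field_simp
      rw [e2] at hmul
      nlinarith [hmul, hD]
    refine ⟨some (Sum.inr je), ?_⟩
    refine ⟨hdist, hsmall, β, ?_, ?_⟩
    · rw [← hvdef, ← hx_eq]
      rw [dist_comm]
      exact hend
    · rw [← hvdef]
      exact halign

end Aux

/-- Corollary 3.10 of the paper. There is a universal constant `C₀ ≥ 1`
such that the `Δ/c`-neighbourhood of `𝓛_{λ,(1+1/c)Δ}(P,p)` can be covered by at most
`k·(C₀·c)^d` closed balls of radius `Δ/c`. -/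
theorem nbhd_locusPoint_cover :
    ∃ C₀ : ℝ, 1 ≤ C₀ ∧
      ∀ (d k n : ℕ), n + 1 ≤ k →
      ∀ (P : Fin (n + 1) → Euc d) (Δ lam c : ℝ), 0 < Δ → 0 < lam → 1 < c →
      ∀ p : Euc d, ∃ F : Finset (Euc d), (F.card : ℝ) ≤ k * (C₀ * c) ^ d ∧
        nbhd (locusPoint P lam ((1 + 1 / c) * Δ) p) (Δ / c) ⊆
          ⋃ x ∈ F, closedBall x (Δ / c) := by
  refine ⟨170, by norm_num, ?_⟩
  intro d k n hk P Δ lam c hΔ hlam hc p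
  have hkpos : 1 ≤ k := le_trans (by omega) hk
  have hc0 : (0:ℝ) < c := by linarith
  have hρ : 0 < Δ / c := by positivity
  by_cases hd : d = 0
  · subst hd
    refine ⟨{0}, ?_, ?_⟩
    · simp only [Finset.card_singleton, Nat.cast_one, pow_zero, mul_one]
      exact_mod_cast hkpos
    · intro x _
      refine mem_iUnion₂.2 ⟨0, Finset.mem_singleton_self 0, ?_⟩
      rw [mem_closedBall]
      have hzero : dist x (0 : Euc 0) = 0 := by
        have : x = (0 : Euc 0) := Subsingleton.elim x 0
        rw [this, dist_self]
      rw [hzero]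
      positivity
  classical
  have hd1 : 1 ≤ d := Nat.one_le_iff_ne_zero.2 hd
  set ρ := Δ / c with hρdef
  have hρΔ : ρ ≤ Δ := by
    rw [hρdef]
    exact div_le_self hΔ.le hc.le
  set A := nbhd (locusPoint P lam ((1 + 1 / c) * Δ) p) ρ with hAdef
  have hsep_card : ∀ S : Finset (Euc d), (↑S ⊆ A) →
      (∀ x ∈ S, ∀ y ∈ S, x ≠ y → ρ < dist x y) →
      (S.card : ℝ) ≤ (2 * (n:ℝ) + 2) * (85 * c) ^ d := by
    intro S hSA hSsep
    have hcls : ∀ x ∈ S, ∃ i, ∃ a ∈ clsSet P p lam (2 * Δ) i, dist x a ≤ ρ := by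
      intro x hxS
      obtain ⟨a, haL, hdxa⟩ := hSA hxS
      obtain ⟨i, hai⟩ := mem_iUnion.1 (locus_subset_cls P p Δ lam c hΔ hlam hc haL)
      exact ⟨i, a, hai, hdxa⟩
    have hsub : S ⊆ Finset.univ.biUnion
        (fun i => S.filter (fun x => ∃ a ∈ clsSet P p lam (2 * Δ) i, dist x a ≤ ρ)) := by
      intro x hx
      rw [Finset.mem_biUnion]
      obtain ⟨i, hi⟩ := hcls x hx
      exact ⟨i, Finset.mem_univ i, Finset.mem_filter.2 ⟨hx, hi⟩⟩
    have hcard1 : S.card ≤ ∑ i : Option (Fin (n+1) ⊕ Fin n),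
        (S.filter (fun x => ∃ a ∈ clsSet P p lam (2 * Δ) i, dist x a ≤ ρ)).card :=
      le_trans (Finset.card_le_card hsub) Finset.card_biUnion_le
    have hclass : ∀ i : Option (Fin (n+1) ⊕ Fin n),
        ((S.filter (fun x => ∃ a ∈ clsSet P p lam (2 * Δ) i, dist x a ≤ ρ)).card : ℝ)
          ≤ (85 * c) ^ d := by
      intro i
      set T := S.filter (fun x => ∃ a ∈ clsSet P p lam (2 * Δ) i, dist x a ≤ ρ) with hT
      have hdiam : ∀ x ∈ T, ∀ y ∈ T, dist x y ≤ 42 * Δ := by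
        intro x hx y hy
        obtain ⟨hxS, a, ha, hxa⟩ := Finset.mem_filter.1 hx
        obtain ⟨hyS, b, hb, hyb⟩ := Finset.mem_filter.1 hy
        have h1 : dist a b ≤ 20 * (2 * Δ) :=
          clsSet_diam P p lam (2 * Δ) (by linarith) i a ha b hb
        calc dist x y ≤ dist x a + dist a b + dist b y := dist_triangle4 _ _ _ _
          _ ≤ 42 * Δ := by
              rw [dist_comm b y]
              linarith
      have hsepT : ∀ x ∈ T, ∀ y ∈ T, x ≠ y → ρ < dist x y := fun x hx y hy hxy =>
        hSsep x (Finset.mem_of_mem_filter x hx) y (Finset.mem_of_mem_filter y hy) hxy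
      have hpack := packing_bound T ρ (42 * Δ) hρ (by linarith) hdiam hsepT
      refine hpack.trans ?_
      have e : 2 * (42 * Δ) / ρ + 1 = 84 * c + 1 := by
        rw [hρdef]
        field_simp
        ring
      rw [e]
      exact pow_le_pow_left₀ (by linarith) (by linarith) d
    have hcardcast : (S.card : ℝ) ≤ ∑ i : Option (Fin (n+1) ⊕ Fin n),
        ((S.filter (fun x => ∃ a ∈ clsSet P p lam (2 * Δ) i, dist x a ≤ ρ)).card : ℝ) := by
      exact_mod_cast hcard1
    refine hcardcast.trans ?_
    calc (∑ i : Option (Fin (n+1) ⊕ Fin n),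
          ((S.filter (fun x => ∃ a ∈ clsSet P p lam (2 * Δ) i, dist x a ≤ ρ)).card : ℝ))
        ≤ ∑ _i : Option (Fin (n+1) ⊕ Fin n), (85 * c) ^ d :=
          Finset.sum_le_sum (fun i _ => hclass i)
      _ = (Fintype.card (Option (Fin (n+1) ⊕ Fin n)) : ℝ) * (85 * c) ^ d := by
          rw [Finset.sum_const, Finset.card_univ, nsmul_eq_mul]
      _ = (2 * (n:ℝ) + 2) * (85 * c) ^ d := by
          have hcard : Fintype.card (Option (Fin (n+1) ⊕ Fin n)) = 2 * n + 2 := by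
            simp [Fintype.card_option, Fintype.card_sum]
            omega
          rw [hcard]
          push_cast
          ring
  -- maximal separated subset of A
  set B : ℕ := ⌊(2 * (n:ℝ) + 2) * (85 * c) ^ d⌋₊ with hB
  set Pr : ℕ → Prop := fun m => ∃ S : Finset (Euc d), (↑S ⊆ A) ∧
    (∀ x ∈ S, ∀ y ∈ S, x ≠ y → ρ < dist x y) ∧ S.card = m with hPr
  have hP0 : Pr 0 := ⟨∅, by simp, by simp, rfl⟩
  have hPbound : ∀ m, Pr m → m ≤ B := by
    rintro m ⟨S, h1, h2, h3⟩
    rw [← h3]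
    exact Nat.le_floor (hsep_card S h1 h2)
  have hPN : Pr (Nat.findGreatest Pr B) := Nat.findGreatest_spec (Nat.zero_le B) hP0
  obtain ⟨S, hSA, hSsep, hScard⟩ := hPN
  refine ⟨S, ?_, ?_⟩
  · have h1 : (S.card : ℝ) ≤ (2 * (n:ℝ) + 2) * (85 * c) ^ d := hsep_card S hSA hSsep
    refine h1.trans ?_
    have h2 : (2 * (n:ℝ) + 2) ≤ 2 * (k:ℝ) := by
      have : ((n:ℝ) + 1) ≤ (k:ℝ) := by exact_mod_cast hk
      linarith
    have h3 : (0:ℝ) ≤ (85 * c) ^ d := by positivity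
    have h4 : (2:ℝ) ≤ 2 ^ d := by
      calc (2:ℝ) = 2 ^ 1 := (pow_one 2).symm
        _ ≤ 2 ^ d := pow_le_pow_right₀ one_le_two hd1
    have hk0 : (0:ℝ) ≤ k := Nat.cast_nonneg k
    calc (2 * (n:ℝ) + 2) * (85 * c) ^ d ≤ 2 * (k:ℝ) * (85 * c) ^ d :=
          mul_le_mul_of_nonneg_right h2 h3
      _ ≤ (k:ℝ) * (170 * c) ^ d := by
          have e2 : ((170:ℝ) * c) ^ d = 2 ^ d * (85 * c) ^ d := by
            rw [show (170:ℝ) * c = 2 * (85 * c) by ring, mul_pow]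
          rw [e2]
          have hint : (0:ℝ) ≤ (k:ℝ) * (85 * c) ^ d * (2 ^ d - 2) :=
            mul_nonneg (mul_nonneg hk0 h3) (by linarith)
          nlinarith [hint]
  · intro x hxA
    by_contra hnot
    rw [mem_iUnion₂] at hnot
    push_neg at hnot
    have hxall : ∀ y ∈ S, ρ < dist x y := by
      intro y hy
      have := hnot y hy
      rw [mem_closedBall] at this
      exact lt_of_not_ge (fun h => this h)
    have hxS : x ∉ S := by
      intro hxS
      have := hxall x hxS
      rw [dist_self] at this
      linarith
    have hnew : Pr (Nat.findGreatest Pr B + 1) := by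
      refine ⟨insert x S, ?_, ?_, ?_⟩
      · rw [Finset.coe_insert]
        exact Set.insert_subset hxA hSA
      · intro a ha b hb hab
        rw [Finset.mem_insert] at ha hb
        rcases ha with rfl | ha
        · rcases hb with rfl | hb
          · exact absurd rfl hab
          · exact hxall b hb
        · rcases hb with rfl | hb
          · rw [dist_comm]; exact hxall a ha
          · exact hSsep a ha b hb hab
      · rw [Finset.card_insert_of_notMem hxS, hScard]
    exact Nat.findGreatest_is_greatest (Nat.lt_succ_self _) (hPbound _ hnew) hnew
end
end

section
/- Let P be a polygonal curve in ℝ^d, let λ ≥ 0, Δ ≥ 0 and c ≥ 1. Then for all points p, p' ∈ ℝ^d with ‖p − p'‖ ≤ Δ/c, we have 𝓛_{λ,Δ}(P,p) ⊆ N_{Δ/c}(𝓛_{λ,(1+1/c)Δ}(P,p')). -/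
open Set Metric Function

noncomputable section

lemma frechetDist_le_of_close {d : ℕ} (X Y Y' : ℝ → Euc d) (e : ℝ) (he : 0 ≤ e)
    (h : ∀ u : ℝ, dist (Y u) (Y' u) ≤ e) :
    frechetDist X Y' ≤ frechetDist X Y + e := by
  unfold frechetDist
  set S := { r : ℝ | ∃ f g : ℝ → ℝ, IsRepar f ∧ IsRepar g ∧
    ∀ t ∈ Icc (0 : ℝ) 1, dist (X (f t)) (Y (g t)) ≤ r } with hS
  set S' := { r : ℝ | ∃ f g : ℝ → ℝ, IsRepar f ∧ IsRepar g ∧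
    ∀ t ∈ Icc (0 : ℝ) 1, dist (X (f t)) (Y' (g t)) ≤ r } with hS'
  have key : ∀ r ∈ S, r + e ∈ S' := by
    rintro r ⟨f, g, hf, hg, hfg⟩
    refine ⟨f, g, hf, hg, fun t ht => ?_⟩
    calc dist (X (f t)) (Y' (g t)) ≤ dist (X (f t)) (Y (g t)) + dist (Y (g t)) (Y' (g t)) :=
          dist_triangle _ _ _
      _ ≤ r + e := add_le_add (hfg t ht) (h _)
  have key' : ∀ r ∈ S', r + e ∈ S := by
    rintro r ⟨f, g, hf, hg, hfg⟩
    refine ⟨f, g, hf, hg, fun t ht => ?_⟩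
    calc dist (X (f t)) (Y (g t)) ≤ dist (X (f t)) (Y' (g t)) + dist (Y' (g t)) (Y (g t)) :=
          dist_triangle _ _ _
      _ ≤ r + e := add_le_add (hfg t ht) (by rw [dist_comm]; exact h _)
  have hbdd : BddBelow S' := by
    refine ⟨0, fun r hr => ?_⟩
    obtain ⟨f, g, hf, hg, hfg⟩ := hr
    exact le_trans dist_nonneg (hfg 0 ⟨le_refl 0, zero_le_one⟩)
  rcases Set.eq_empty_or_nonempty S with hSe | hSne
  · have hS'e : S' = ∅ := by
      by_contra hne
      obtain ⟨r, hr⟩ := Set.nonempty_iff_ne_empty.mpr hne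
      exact absurd (key' r hr) (by simp [hSe])
    rw [hSe, hS'e, Real.sInf_empty]
    linarith
  · rw [← sub_le_iff_le_add]
    refine le_csInf hSne fun b hb => ?_
    have := csInf_le hbdd (key b hb)
    linarith

/-- Lemma 3.11 of the paper. If `‖p − p'‖ ≤ Δ/c` then
`𝓛_{λ,Δ}(P,p) ⊆ N_{Δ/c}(𝓛_{λ,(1+1/c)Δ}(P,p'))`. -/
theorem locusPoint_subset_nbhd (d n : ℕ) (P : Fin (n + 1) → Euc d) (lam Δ c : ℝ)
    (hlam : 0 ≤ lam) (hΔ : 0 ≤ Δ) (hc : 1 ≤ c) (p p' : Euc d)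
    (hpp : dist p p' ≤ Δ / c) :
    locusPoint P lam Δ p ⊆ nbhd (locusPoint P lam ((1 + 1 / c) * Δ) p') (Δ / c) := by
  have hc0 : 0 < c := lt_of_lt_of_le zero_lt_one hc
  have hΔc : 0 ≤ Δ / c := div_nonneg hΔ hc0.le
  rintro q ⟨hlen, s, t, hs, hst, ht1, hF⟩
  refine ⟨q + (p' - p), ⟨?_, s, t, hs, hst, ht1, ?_⟩, ?_⟩
  · rw [dist_eq_norm, show p' - (q + (p' - p)) = p - q by abel, ← dist_eq_norm]
    exact hlen
  · have hseg : ∀ u : ℝ, dist (seg p q u) (seg p' (q + (p' - p)) u) ≤ Δ / c := by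
      intro u
      have : seg p' (q + (p' - p)) u = seg p q u + (p' - p) := by
        unfold seg; module
      rw [this, dist_eq_norm, show seg p q u - (seg p q u + (p' - p)) = p - p' by abel,
        ← dist_eq_norm]
      exact hpp
    have := frechetDist_le_of_close (subcurve (curveMap P) s t) (seg p q)
      (seg p' (q + (p' - p))) (Δ / c) hΔc hseg
    have heq : (1 + 1 / c) * Δ = Δ + Δ / c := by field_simp
    rw [heq]
    linarith
  · rw [dist_eq_norm, show q - (q + (p' - p)) = p - p' by abel, ← dist_eq_norm]
    exact hpp
end
end

section
/- There is a universal constant C₀ ≥ 1 such that the following holds for all integers d,k,μ ≥ 1 and all ε > 0: for every (μ,ε)-curve P of complexity at most k in ℝ^d and every Δ > 0, there exists a set 𝒟 of (μ,ε)-curves of complexity at most k in ℝ^d with |𝒟| ≤ (C₀^d · k · μ)^k such that every (μ,ε)-curve Q of complexity at most k with d_F(P,Q) ≤ Δ satisfies d_F(Q,Q*) ≤ Δ/2 for some Q* ∈ 𝒟. (Hence the doubling constant of the space of (μ,ε)-curves of complexity at most k in ℝ^d under the Fréchet distance is at most (C₀^d·k·μ)^k, and its doubling dimension is O(k(d + log(kμ))).)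 -/
open Set Metric Function

noncomputable section

namespace DBound

variable {d n : ℕ}

/-- Length of the `j`-th edge (`0`-based), `0` if out of range. -/
def elen (p : Fin (n + 1) → Euc d) (j : ℕ) : ℝ :=
  if h : j < n then dist (p ⟨j, by omega⟩) (p ⟨j + 1, by omega⟩) else 0

lemma elen_nonneg (p : Fin (n + 1) → Euc d) (j : ℕ) : 0 ≤ elen p j := by
  unfold elen; split <;> simp [dist_nonneg]

/-- Cumulative length of the first `J` edges. -/
def csum (p : Fin (n + 1) → Euc d) (J : ℕ) : ℝ :=
  ∑ j ∈ Finset.range J, elen p j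

lemma csum_succ (p : Fin (n + 1) → Euc d) (J : ℕ) :
    csum p (J + 1) = csum p J + elen p J := Finset.sum_range_succ _ _

lemma csum_mono (p : Fin (n + 1) → Euc d) {J J' : ℕ} (h : J ≤ J') :
    csum p J ≤ csum p J' := by
  unfold csum
  exact Finset.sum_le_sum_of_subset_of_nonneg (Finset.range_subset_range.2 h)
    (fun i _ _ => elen_nonneg p i)

/-- Arclength function of the polygonal curve `curveMap p`. -/
def sigma (p : Fin (n + 1) → Euc d) (t : ℝ) : ℝ :=
  if n = 0 then 0
  else csum p (min ⌊t * (n : ℝ)⌋₊ (n - 1))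
    + (t * n - (min ⌊t * (n : ℝ)⌋₊ (n - 1) : ℕ)) * elen p (min ⌊t * (n : ℝ)⌋₊ (n - 1))

/-- Piecewise formula for `curveMap` and `sigma` on the `q`-th edge. -/
lemma piece (p : Fin (n + 1) → Euc d) {q : ℕ} (hq : q < n) {t : ℝ}
    (h1 : (q : ℝ) / n ≤ t) (h2 : t ≤ (q + 1 : ℝ) / n) :
    curveMap p t = (1 - (t * n - q)) • p ⟨q, by omega⟩ + (t * n - q) • p ⟨q + 1, by omega⟩
      ∧ sigma p t = csum p q + (t * n - q) * elen p q := by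
  have hn : n ≠ 0 := by omega
  have hn' : (0 : ℝ) < n := by positivity
  have hq1 : (q : ℝ) ≤ t * n := by
    rw [div_le_iff₀ hn'] at h1; linarith
  have hq2 : t * n ≤ (q : ℝ) + 1 := by
    rw [le_div_iff₀ hn'] at h2; push_cast at h2 ⊢; linarith
  have ht0 : 0 ≤ t * n := le_trans (by positivity) hq1
  rcases lt_or_eq_of_le hq2 with hlt | heq
  · -- interior of edge q : floor = q
    have hfl : ⌊t * (n : ℝ)⌋₊ = q := by
      rw [Nat.floor_eq_iff (by positivity)]
      constructor
      · exact_mod_cast hq1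
      · push_cast; linarith
    have hmin : min ⌊t * (n : ℝ)⌋₊ (n - 1) = q := by
      rw [hfl]; omega
    constructor
    · rw [curveMap, dif_neg hn]
      simp only [hmin]
    · rw [sigma, if_neg hn]
      simp only [hmin]
  · -- t * n = q + 1
    have hfl : ⌊t * (n : ℝ)⌋₊ = q + 1 := by
      have h : t * (n:ℝ) = ((q + 1 : ℕ) : ℝ) := by push_cast; linarith
      rw [h, Nat.floor_natCast]
    rcases Nat.lt_or_ge (q + 1) n with hq1n | hq1n
    · -- q + 1 ≤ n - 1 : formula evaluated at vertex q+1 from the next edge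
      have hmin : min ⌊t * (n : ℝ)⌋₊ (n - 1) = q + 1 := by rw [hfl]; omega
      have hcoef : t * (n : ℝ) - ((q + 1 : ℕ) : ℝ) = 0 := by push_cast; linarith
      constructor
      · rw [curveMap, dif_neg hn]
        simp only [hmin]
        rw [show t * (n:ℝ) - ((q+1 : ℕ):ℝ) = 0 from hcoef]
        rw [show t * (n:ℝ) - (q:ℝ) = 1 by linarith]
        simp
      · rw [sigma, if_neg hn]
        simp only [hmin]
        rw [show t * (n:ℝ) - ((q+1 : ℕ):ℝ) = 0 from hcoef]
        rw [show t * (n:ℝ) - (q:ℝ) = 1 by linarith]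
        rw [csum_succ]
        ring
    · -- q = n - 1, t = 1
      have hmin : min ⌊t * (n : ℝ)⌋₊ (n - 1) = q := by rw [hfl]; omega
      constructor
      · rw [curveMap, dif_neg hn]; simp only [hmin]
      · rw [sigma, if_neg hn]; simp only [hmin]

end DBound
namespace DBound

variable {d n : ℕ}

lemma curveMap_one (p : Fin (n + 1) → Euc d) (hn : n ≠ 0) :
    curveMap p 1 = p ⟨n, by omega⟩ ∧ sigma p 1 = csum p n := by
  have hn0 : 0 < n := Nat.pos_of_ne_zero hn
  have hn' : (0:ℝ) < n := by exact_mod_cast hn0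
  have hc : ((n - 1 : ℕ) : ℝ) = (n : ℝ) - 1 := by
    have := Nat.cast_sub (by omega : 1 ≤ n) (R := ℝ); simpa using this
  have h1 : ((n-1 : ℕ) : ℝ) / n ≤ 1 := by
    rw [div_le_one hn', hc]; linarith
  have h2 : (1:ℝ) ≤ (((n-1:ℕ):ℝ) + 1) / n := by
    rw [le_div_iff₀ hn', hc]; linarith
  obtain ⟨hcm, hs⟩ := piece p (by omega : n - 1 < n) h1 h2
  have hco : (1:ℝ) * n - ((n-1:ℕ):ℝ) = 1 := by rw [hc]; ring
  constructor
  · rw [hcm, hco]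
    simp only [sub_self, zero_smul, one_smul, zero_add]
    exact congrArg p (Fin.ext (show n-1+1 = n from by omega))
  · rw [hs, hco, one_mul]
    have h3 : csum p (n-1+1) = csum p (n-1) + elen p (n-1) := csum_succ p (n-1)
    rw [show n-1+1 = n from by omega] at h3
    linarith

/-- `curveMap` at the vertex parameters. -/
lemma curveMap_vertex (p : Fin (n + 1) → Euc d) {q : ℕ} (hq : q ≤ n) :
    curveMap p ((q : ℝ) / n) = p ⟨q, by omega⟩ := by
  rcases Nat.eq_zero_or_pos n with hn | hn
  · subst hn
    interval_cases q
    rw [curveMap, dif_pos rfl]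
    exact congrArg p (Fin.ext rfl)
  · have hn' : (0:ℝ) < n := by exact_mod_cast hn
    rcases Nat.lt_or_ge q n with hqn | hqn
    · have h2 : (q:ℝ)/n ≤ ((q:ℝ) + 1)/n := by gcongr <;> linarith
      have := (piece p hqn (le_refl ((q:ℝ)/n)) h2).1
      rw [this, div_mul_cancel₀ _ (ne_of_gt hn')]
      simp
    · have hqe : q = n := le_antisymm hq hqn
      have ht : (q:ℝ)/n = 1 := by rw [hqe]; exact div_self (ne_of_gt hn')
      rw [ht, (curveMap_one p (by omega)).1]
      exact congrArg p (Fin.ext (by simp [hqe]))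

lemma sigma_zero (p : Fin (n + 1) → Euc d) : sigma p 0 = 0 := by
  rw [sigma]
  split
  · rfl
  · simp [csum]

/-- Within one edge, the arclength increment equals the chord length. -/
lemma edge_dist_sigma (p : Fin (n + 1) → Euc d) {q : ℕ} (hq : q < n) {x y : ℝ}
    (hx1 : (q : ℝ) / n ≤ x) (hxy : x ≤ y) (hy2 : y ≤ (q + 1 : ℝ) / n) :
    dist (curveMap p x) (curveMap p y) = sigma p y - sigma p x := by
  have hn0 : 0 < n := by omega
  have hn' : (0:ℝ) < n := by exact_mod_cast hn0
  obtain ⟨hcx, hsx⟩ := piece p hq hx1 (hxy.trans hy2)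
  obtain ⟨hcy, hsy⟩ := piece p hq (hx1.trans hxy) hy2
  have hs : sigma p y - sigma p x = (y - x) * n * elen p q := by
    rw [hsx, hsy]; ring
  rw [hcx, hcy, hs]
  have hdiff : ((1 - (y * n - q)) • p ⟨q, by omega⟩ + (y * n - q) • p ⟨q+1, by omega⟩)
      - ((1 - (x * n - q)) • p ⟨q, by omega⟩ + (x * n - q) • p ⟨q+1, by omega⟩)
      = ((y - x) * n) • (p ⟨q+1, by omega⟩ - p ⟨q, by omega⟩) := by
    module
  rw [dist_eq_norm', hdiff, norm_smul]
  rw [Real.norm_of_nonneg (mul_nonneg (by linarith) hn'.le)]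
  rw [elen, dif_pos hq, dist_eq_norm']

/-- clamped subdivision point -/
def cpt (τ τ' : ℝ) (n q : ℕ) : ℝ := min τ' (max τ ((q : ℝ) / n))

lemma cpt_zero {τ τ' : ℝ} (h0 : 0 ≤ τ) (hττ : τ ≤ τ') : cpt τ τ' n 0 = τ := by
  simp only [cpt, Nat.cast_zero, zero_div]
  rw [max_eq_left h0, min_eq_right hττ]

lemma cpt_last {τ τ' : ℝ} (hn : n ≠ 0) (hττ : τ ≤ τ') (h1 : τ' ≤ 1) : cpt τ τ' n n = τ' := by
  have hn' : (0:ℝ) < n := by exact_mod_cast Nat.pos_of_ne_zero hn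
  simp only [cpt]
  rw [div_self (ne_of_gt hn'), max_eq_right (hττ.trans h1), min_eq_left h1]

lemma cpt_mono {τ τ' : ℝ} {q q' : ℕ} (h : q ≤ q') : cpt τ τ' n q ≤ cpt τ τ' n q' := by
  rcases Nat.eq_zero_or_pos n with hn | hn
  · simp [cpt, hn]
  · have hn' : (0:ℝ) < n := by exact_mod_cast hn
    have hq : (q:ℝ) ≤ (q':ℝ) := by exact_mod_cast h
    exact min_le_min le_rfl (max_le_max le_rfl (by gcongr))

lemma cpt_mem_Icc {τ τ' : ℝ} (h0 : 0 ≤ τ) (hττ : τ ≤ τ') (h1 : τ' ≤ 1) (q : ℕ) :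
    cpt τ τ' n q ∈ Icc (0:ℝ) 1 := by
  constructor
  · exact le_min (h0.trans hττ) (le_max_of_le_left h0)
  · exact min_le_of_left_le h1

lemma chord_decomp (p : Fin (n + 1) → Euc d) (hn : n ≠ 0) {τ τ' : ℝ}
    (h0 : 0 ≤ τ) (hττ : τ ≤ τ') (h1 : τ' ≤ 1) :
    sigma p τ' - sigma p τ =
      ∑ q ∈ Finset.range n,
        dist (curveMap p (cpt τ τ' n q)) (curveMap p (cpt τ τ' n (q+1))) := by
  have hn' : (0:ℝ) < n := by exact_mod_cast Nat.pos_of_ne_zero hn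
  have key : ∀ q ∈ Finset.range n,
      dist (curveMap p (cpt τ τ' n q)) (curveMap p (cpt τ τ' n (q + 1)))
        = sigma p (cpt τ τ' n (q + 1)) - sigma p (cpt τ τ' n q) := by
    intro q hqr
    have hq : q < n := Finset.mem_range.1 hqr
    rcases eq_or_lt_of_le (cpt_mono (τ := τ) (τ' := τ') (by omega : q ≤ q + 1)) with he | hlt
    · rw [← he]; simp
    · have hcast : ((q+1 : ℕ) : ℝ)/n = ((q:ℝ)+1)/n := by push_cast; ring
      have hcq_lb : (q : ℝ) / n ≤ cpt τ τ' n q := by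
        by_contra hcon
        push_neg at hcon
        have h3 : cpt τ τ' n q = τ' := by
          rcases min_cases τ' (max τ ((q:ℝ)/n)) with ⟨h4, _⟩ | ⟨h4, _⟩
          · exact h4
          · exfalso
            rw [cpt, h4] at hcon
            exact absurd (le_max_right τ ((q:ℝ)/n)) (not_le.2 hcon)
        have h5 : cpt τ τ' n (q+1) ≤ cpt τ τ' n q := by
          rw [h3]; exact min_le_left _ _
        exact absurd hlt (not_lt.2 h5)
      have hτub : τ ≤ ((q:ℝ)+1)/n := by
        by_contra hcon
        push_neg at hcon
        have h4 : cpt τ τ' n (q+1) = τ := by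
          rw [cpt, hcast, max_eq_left hcon.le, min_eq_right hττ]
        have h5 : cpt τ τ' n (q+1) ≤ cpt τ τ' n q := by
          rw [h4]
          exact le_min hττ (le_max_left _ _)
        exact absurd hlt (not_lt.2 h5)
      have hcq1_ub : cpt τ τ' n (q+1) ≤ ((q:ℝ)+1)/n := by
        rw [cpt, hcast]
        exact min_le_of_right_le (max_le hτub le_rfl)
      exact edge_dist_sigma p hq hcq_lb hlt.le hcq1_ub
  calc sigma p τ' - sigma p τ
      = sigma p (cpt τ τ' n n) - sigma p (cpt τ τ' n 0) := by
        rw [cpt_zero h0 hττ, cpt_last hn hττ h1]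
    _ = ∑ q ∈ Finset.range n, (sigma p (cpt τ τ' n (q+1)) - sigma p (cpt τ τ' n q)) :=
        (Finset.sum_range_sub (fun q => sigma p (cpt τ τ' n q)) n).symm
    _ = _ := by
        apply Finset.sum_congr rfl
        intro q hq
        exact (key q hq).symm

/-- Chord length is at most arclength difference. -/
lemma dist_le_sigma (p : Fin (n + 1) → Euc d) {τ τ' : ℝ}
    (h0 : 0 ≤ τ) (hττ : τ ≤ τ') (h1 : τ' ≤ 1) :
    dist (curveMap p τ) (curveMap p τ') ≤ sigma p τ' - sigma p τ := by
  rcases Nat.eq_zero_or_pos n with hn | hn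
  · subst hn
    rw [curveMap, dif_pos rfl, curveMap, dif_pos rfl, dist_self]
    rw [sigma, if_pos rfl, sigma, if_pos rfl]
    norm_num
  · rw [chord_decomp p (by omega) h0 hττ h1]
    have := dist_le_range_sum_dist (fun q => curveMap p (cpt τ τ' n q)) n
    simpa [cpt_zero h0 hττ, cpt_last (by omega : n ≠ 0) hττ h1] using this

lemma dist_le_abs_sigma (p : Fin (n + 1) → Euc d) {τ τ' : ℝ}
    (hτ : τ ∈ Icc (0:ℝ) 1) (hτ' : τ' ∈ Icc (0:ℝ) 1) :
    dist (curveMap p τ) (curveMap p τ') ≤ |sigma p τ' - sigma p τ| := by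
  rcases le_total τ τ' with h | h
  · exact (dist_le_sigma p hτ.1 h hτ'.2).trans (le_abs_self _)
  · rw [dist_comm, abs_sub_comm]
    exact (dist_le_sigma p hτ'.1 h hτ.2).trans (le_abs_self _)

lemma sigma_nonneg (p : Fin (n + 1) → Euc d) {τ : ℝ} (hτ : τ ∈ Icc (0:ℝ) 1) :
    0 ≤ sigma p τ := by
  have := dist_le_sigma p le_rfl hτ.1 hτ.2
  rw [sigma_zero] at this
  linarith [dist_nonneg (x := curveMap p 0) (y := curveMap p τ)]

lemma sigma_le_total (p : Fin (n + 1) → Euc d) {τ : ℝ} (hτ : τ ∈ Icc (0:ℝ) 1) :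
    sigma p τ ≤ csum p n := by
  rcases Nat.eq_zero_or_pos n with hn | hn
  · subst hn; rw [sigma, if_pos rfl, csum]; simp
  · have := dist_le_sigma p hτ.1 hτ.2 le_rfl
    rw [(curveMap_one p (by omega)).2] at this
    linarith [dist_nonneg (x := curveMap p τ) (y := curveMap p 1)]

/-- The whole curve stays within total length of its first vertex. -/
lemma dist_curveMap_vertex0 (p : Fin (n + 1) → Euc d) {τ : ℝ} (hτ : τ ∈ Icc (0:ℝ) 1) :
    dist (curveMap p 0) (curveMap p τ) ≤ csum p n := by
  have h := dist_le_sigma p le_rfl hτ.1 hτ.2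
  rw [sigma_zero] at h
  exact h.trans (by simpa using sigma_le_total p hτ)

end DBound
namespace DBound

variable {d : ℕ}

lemma sep_card_le (x : Euc d) (r : ℝ) (hr : 0 < r) (s : Finset (Euc d))
    (hs : ↑s ⊆ closedBall x r)
    (hsep : ∀ a ∈ s, ∀ b ∈ s, a ≠ b → r / 2 ≤ dist a b) :
    s.card ≤ 5 ^ d := by
  classical
  have hinj : Function.Injective (fun u : Euc d => (2 / r) • (u - x)) := by
    intro a b hab
    simp only at hab
    have h2r : (2 / r) ≠ 0 := by positivity
    have := smul_right_injective (Euc d) h2r hab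
    exact sub_left_injective this
  set s' : Finset (Euc d) := s.image (fun u => (2 / r) • (u - x)) with hs'
  have hcard : s'.card = s.card := Finset.card_image_of_injective s hinj
  have h1 : ∀ c ∈ s', ‖c‖ ≤ 2 := by
    intro c hc
    rw [hs', Finset.mem_image] at hc
    obtain ⟨u, hu, rfl⟩ := hc
    rw [norm_smul, Real.norm_of_nonneg (by positivity)]
    have : ‖u - x‖ ≤ r := by
      have := hs hu
      rwa [mem_closedBall, dist_eq_norm] at this
    calc 2 / r * ‖u - x‖ ≤ 2 / r * r := by gcongr
      _ = 2 := by field_simp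
  have h2 : ∀ c ∈ s', ∀ b ∈ s', c ≠ b → 1 ≤ ‖c - b‖ := by
    intro c hc b hb hcb
    rw [hs', Finset.mem_image] at hc hb
    obtain ⟨u, hu, rfl⟩ := hc
    obtain ⟨v, hv, rfl⟩ := hb
    have huv : u ≠ v := fun h => hcb (by rw [h])
    have : (2/r) • (u - x) - (2/r) • (v - x) = (2/r) • (u - v) := by module
    rw [this, norm_smul, Real.norm_of_nonneg (by positivity)]
    have hd : r / 2 ≤ ‖u - v‖ := by
      rw [← dist_eq_norm]; exact hsep u hu v hv huv
    calc (1:ℝ) = 2/r * (r/2) := by field_simp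
      _ ≤ 2/r * ‖u - v‖ := by gcongr
  have := Besicovitch.card_le_of_separated s' h1 h2
  rwa [hcard, finrank_euclideanSpace_fin] at this

lemma exists_halving_net (x : Euc d) (r : ℝ) (hr : 0 < r) :
    ∃ t : Finset (Euc d), t.card ≤ 5 ^ d ∧ ↑t ⊆ closedBall x r ∧
      ∀ z ∈ closedBall x r, ∃ y ∈ t, dist z y ≤ r / 2 := by
  classical
  set C : Set ℕ := {N | ∃ s : Finset (Euc d), (↑s ⊆ closedBall x r) ∧
    (∀ a ∈ s, ∀ b ∈ s, a ≠ b → r / 2 ≤ dist a b) ∧ s.card = N} with hC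
  have hbdd : BddAbove C := by
    refine ⟨5 ^ d, ?_⟩
    rintro N ⟨s, h1, h2, rfl⟩
    exact sep_card_le x r hr s h1 h2
  have hne : C.Nonempty := ⟨0, ∅, by simp⟩
  obtain ⟨s, hsub, hsep, hcard⟩ := Nat.sSup_mem hne hbdd
  refine ⟨s, ?_, hsub, ?_⟩
  · rw [hcard]; exact csSup_le hne (by rintro N ⟨s', h1, h2, rfl⟩; exact sep_card_le x r hr s' h1 h2)
  · intro z hz
    by_contra hcon
    push_neg at hcon
    have hznotin : z ∉ s := by
      intro hzs
      exact absurd (show dist z z ≤ r / 2 by simp; positivity) (not_le.2 (by simpa using hcon z hzs))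
    have hmem : s.card + 1 ∈ C := by
      refine ⟨insert z s, ?_, ?_, ?_⟩
      · intro a ha
        rcases Finset.mem_insert.1 ha with rfl | ha'
        · exact hz
        · exact hsub ha'
      · intro a ha b hb hab
        rcases Finset.mem_insert.1 ha with rfl | ha' <;>
          rcases Finset.mem_insert.1 hb with rfl | hb'
        · exact absurd rfl hab
        · exact (hcon b hb').le
        · rw [dist_comm]; exact (hcon a ha').le
        · exact hsep a ha' b hb' hab
      · rw [Finset.card_insert_of_notMem hznotin]
    have := le_csSup hbdd hmem
    rw [hcard] at this
    omega

lemma exists_iter_net (j : ℕ) (x : Euc d) (r : ℝ) (hr : 0 < r) :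
    ∃ t : Finset (Euc d), t.card ≤ (5 ^ d) ^ j ∧
      ∀ z ∈ closedBall x r, ∃ y ∈ t, dist z y ≤ r / 2 ^ j := by
  classical
  induction j with
  | zero => exact ⟨{x}, by simp, fun z hz => ⟨x, by simp, by simpa [dist_comm] using hz⟩⟩
  | succ j ih =>
    obtain ⟨t, htc, htcov⟩ := ih
    have hr2 : 0 < r / 2 ^ j := by positivity
    choose F hFc hFsub hFcov using fun y : Euc d => exists_halving_net y (r / 2 ^ j) hr2
    refine ⟨t.biUnion F, ?_, ?_⟩
    · calc (t.biUnion F).card ≤ ∑ y ∈ t, (F y).card := Finset.card_biUnion_le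
        _ ≤ ∑ _y ∈ t, 5 ^ d := Finset.sum_le_sum (fun y _ => hFc y)
        _ = t.card * 5 ^ d := by rw [Finset.sum_const, smul_eq_mul]
        _ ≤ (5 ^ d) ^ j * 5 ^ d := by gcongr
        _ = (5 ^ d) ^ (j + 1) := by ring
    · intro z hz
      obtain ⟨y, hyt, hy⟩ := htcov z hz
      obtain ⟨w, hwF, hw⟩ := hFcov y z (by rwa [mem_closedBall])
      refine ⟨w, Finset.mem_biUnion.2 ⟨y, hyt, hwF⟩, ?_⟩
      calc dist z w ≤ (r / 2 ^ j) / 2 := hw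
        _ = r / 2 ^ (j + 1) := by ring

/-- A `Δ/16`-net of the ball of radius `(9/4)Δ`, of size at most `16384^d`. -/
lemma exists_ball_net (Δ : ℝ) (hΔ : 0 < Δ) :
    ∃ t : Finset (Euc d), t.card ≤ 16384 ^ d ∧
      ∀ w : Euc d, ‖w‖ ≤ 9 / 4 * Δ → ∃ y ∈ t, dist w y ≤ Δ / 16 := by
  obtain ⟨t, htc, htcov⟩ := exists_iter_net 6 (0 : Euc d) (9 / 4 * Δ) (by positivity)
  refine ⟨t, ?_, ?_⟩
  · calc t.card ≤ (5 ^ d) ^ 6 := htc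
      _ = (5 ^ 6) ^ d := by rw [← pow_mul, ← pow_mul, Nat.mul_comm]
      _ ≤ 16384 ^ d := Nat.pow_le_pow_left (by norm_num) d
  · intro w hw
    obtain ⟨y, hyt, hy⟩ := htcov w (by rwa [mem_closedBall, dist_zero_right])
    exact ⟨y, hyt, hy.trans (by norm_num; linarith)⟩

end DBound
namespace DBound

lemma repar_mem {f : ℝ → ℝ} (hf : IsRepar f) {t : ℝ} (ht : t ∈ Icc (0:ℝ) 1) :
    f t ∈ Icc (0:ℝ) 1 := by
  rw [← hf.2.2]; exact mem_image_of_mem f ht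

lemma repar_zero {f : ℝ → ℝ} (hf : IsRepar f) : f 0 = 0 := by
  obtain ⟨t₀, ht₀, hft₀⟩ : (0:ℝ) ∈ f '' Icc 0 1 := by rw [hf.2.2]; exact ⟨le_rfl, zero_le_one⟩
  have h1 : f 0 ≤ f t₀ := hf.2.1 (by constructor <;> norm_num) ht₀ ht₀.1
  have h2 : 0 ≤ f 0 := (repar_mem hf (by constructor <;> norm_num)).1
  rw [hft₀] at h1
  linarith

lemma repar_one {f : ℝ → ℝ} (hf : IsRepar f) : f 1 = 1 := by
  obtain ⟨t₀, ht₀, hft₀⟩ : (1:ℝ) ∈ f '' Icc 0 1 := by rw [hf.2.2]; exact ⟨zero_le_one, le_rfl⟩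
  have h1 : f t₀ ≤ f 1 := hf.2.1 ht₀ (by constructor <;> norm_num) ht₀.2
  have h2 : f 1 ≤ 1 := (repar_mem hf (by constructor <;> norm_num)).2
  rw [hft₀] at h1
  linarith

/-- Minimal point of `Icc a b` where the monotone continuous `F` reaches value `y`. -/
noncomputable def pick (F : ℝ → ℝ) (a b y : ℝ) : ℝ :=
  sInf {t | t ∈ Icc a b ∧ y ≤ F t}

lemma pick_spec {F : ℝ → ℝ} (hF : IsRepar F) {a b y : ℝ} (hab : a ≤ b)
    (ha : a ∈ Icc (0:ℝ) 1) (hb : b ∈ Icc (0:ℝ) 1) (hya : F a ≤ y) (hyb : y ≤ F b) :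
    pick F a b y ∈ Icc a b ∧ F (pick F a b y) = y := by
  have hsub : Icc a b ⊆ Icc (0:ℝ) 1 := fun t ht => ⟨ha.1.trans ht.1, ht.2.trans hb.2⟩
  set S := {t | t ∈ Icc a b ∧ y ≤ F t} with hS
  have hbS : b ∈ S := ⟨⟨hab, le_rfl⟩, hyb⟩
  have hSne : S.Nonempty := ⟨b, hbS⟩
  have hSbdd : BddBelow S := ⟨a, fun t ht => ht.1.1⟩
  have hclosed : IsClosed S := by
    have h1 : ContinuousOn F (Icc a b) := (hF.1).mono hsub
    have : S = Icc a b ∩ F ⁻¹' Ici y := by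
      ext t; simp only [hS, Set.mem_setOf_eq, Set.mem_inter_iff, Set.mem_preimage, Set.mem_Ici]
    rw [this]
    exact h1.preimage_isClosed_of_isClosed isClosed_Icc isClosed_Ici
  have hmem : pick F a b y ∈ S := hclosed.csInf_mem hSne hSbdd
  refine ⟨hmem.1, le_antisymm ?_ hmem.2⟩
  by_contra hcon
  push_neg at hcon
  obtain ⟨t, htmem, htv⟩ : y ∈ F '' Icc a (pick F a b y) := by
    apply intermediate_value_Icc hmem.1.1 ((hF.1).mono fun t ht => hsub ⟨ht.1, ht.2.trans hmem.1.2⟩)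
    exact ⟨hya, hcon.le⟩
  have htS : t ∈ S := ⟨⟨htmem.1, htmem.2.trans hmem.1.2⟩, htv.ge⟩
  have : pick F a b y ≤ t := csInf_le hSbdd htS
  have hte : t = pick F a b y := le_antisymm htmem.2 this
  rw [hte] at htv
  exact absurd htv (by linarith)

lemma pick_mono {F : ℝ → ℝ} {a b y y' : ℝ} (hab : a ≤ b) (hyy : y ≤ y') (hyb : y' ≤ F b) :
    pick F a b y ≤ pick F a b y' := by
  refine csInf_le_csInf ⟨a, fun t ht => ht.1.1⟩ ?_ (fun t ht => ⟨ht.1, hyy.trans ht.2⟩)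
  exact ⟨b, ⟨hab, le_rfl⟩, hyb⟩

end DBound
namespace DBound

variable {d n m : ℕ}

lemma dist_combo {A B : Euc d} {μ ν : ℝ} (hμν : μ ≤ ν) :
    dist ((1-μ) • A + μ • B) ((1-ν) • A + ν • B) = (ν - μ) * dist A B := by
  have hdiff : ((1-ν) • A + ν • B) - ((1-μ) • A + μ • B) = (ν - μ) • (B - A) := by
    module
  rw [dist_eq_norm', hdiff, norm_smul, Real.norm_of_nonneg (by linarith),
    dist_eq_norm', norm_sub_rev]

section Matched

variable (P : Fin (n + 1) → Euc d) (R : Fin (m + 1) → Euc d) (f g : ℝ → ℝ) (Δ' : ℝ)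

/-- The minimal time at which `g` reaches the `i`-th vertex parameter of `R`. -/
noncomputable def TT (i : ℕ) : ℝ := pick g 0 1 ((i : ℝ) / m)

variable {f g}

lemma div_m_mem {i : ℕ} (hi : i ≤ m) : (0:ℝ) ≤ (i:ℝ)/m ∧ (i:ℝ)/m ≤ 1 := by
  rcases Nat.eq_zero_or_pos m with hm | hm
  · subst hm
    interval_cases i
    norm_num
  · have hm' : (0:ℝ) < m := by exact_mod_cast hm
    constructor
    · positivity
    · rw [div_le_one hm']; exact_mod_cast hi

lemma TT_spec (hg : IsRepar g) {i : ℕ} (hi : i ≤ m) :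
    TT (m := m) g i ∈ Icc (0:ℝ) 1 ∧ g (TT (m := m) g i) = (i:ℝ)/m := by
  have h01 : (0:ℝ) ∈ Icc (0:ℝ) 1 := by constructor <;> norm_num
  have h11 : (1:ℝ) ∈ Icc (0:ℝ) 1 := by constructor <;> norm_num
  apply pick_spec hg zero_le_one h01 h11
  · rw [repar_zero hg]; exact (div_m_mem hi).1
  · rw [repar_one hg]; exact (div_m_mem hi).2

lemma TT_mono (hg : IsRepar g) {i j : ℕ} (hij : i ≤ j) (hj : j ≤ m) :
    TT (m := m) g i ≤ TT (m := m) g j := by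
  have hdiv : (i:ℝ)/m ≤ (j:ℝ)/m := by
    rcases Nat.eq_zero_or_pos m with hm | hm
    · subst hm; norm_num
    · have hm' : (0:ℝ) < m := by exact_mod_cast hm
      have hij' : (i:ℝ) ≤ (j:ℝ) := by exact_mod_cast hij
      gcongr
  apply pick_mono zero_le_one hdiv
  rw [repar_one hg]; exact (div_m_mem hj).2

variable {P R Δ'}

/-- distance from each vertex of `R` to its matched point on `P`. -/
lemma vertex_close (hg : IsRepar g)
    (hsup : ∀ t ∈ Icc (0:ℝ) 1, dist (curveMap P (f t)) (curveMap R (g t)) ≤ Δ')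
    {i : ℕ} (hi : i ≤ m) :
    dist (curveMap P (f (TT (m := m) g i))) (R ⟨i, by omega⟩) ≤ Δ' := by
  obtain ⟨hmem, hval⟩ := TT_spec hg hi
  have := hsup _ hmem
  rwa [hval, curveMap_vertex R hi] at this

/-- Upper bound on the arclength increment of `P` along a matched edge of `R`. -/
lemma sigma_incr_le (hf : IsRepar f) (hg : IsRepar g) (hΔ' : 0 ≤ Δ')
    (hsup : ∀ t ∈ Icc (0:ℝ) 1, dist (curveMap P (f t)) (curveMap R (g t)) ≤ Δ')
    {i : ℕ} (hi1 : 1 ≤ i) (him : i ≤ m) :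
    sigma P (f (TT (m := m) g i)) - sigma P (f (TT (m := m) g (i-1)))
      ≤ dist (R ⟨i-1, by omega⟩) (R ⟨i, by omega⟩) + 2 * (n + 1) * Δ' := by
  have hm : 0 < m := by omega
  have hm' : (0:ℝ) < m := by exact_mod_cast hm
  obtain ⟨hT1mem, hT1val⟩ := TT_spec (m := m) hg (by omega : i - 1 ≤ m)
  obtain ⟨hT2mem, hT2val⟩ := TT_spec (m := m) hg him
  set t1 := TT (m := m) g (i-1)
  set t2 := TT (m := m) g i
  have hTmono : t1 ≤ t2 := TT_mono hg (by omega) him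
  set τ := f t1 with hτdef
  set τ' := f t2 with hτ'def
  have hτmem : τ ∈ Icc (0:ℝ) 1 := repar_mem hf hT1mem
  have hτ'mem : τ' ∈ Icc (0:ℝ) 1 := repar_mem hf hT2mem
  have hττ' : τ ≤ τ' := hf.2.1 hT1mem hT2mem hTmono
  have hdnn : (0:ℝ) ≤ dist (R ⟨i-1, by omega⟩) (R ⟨i, by omega⟩) := dist_nonneg
  rcases Nat.eq_zero_or_pos n with hn | hn
  · subst hn
    rw [sigma, if_pos rfl, sigma, if_pos rfl]
    push_cast
    linarith
  -- main case
  have hnn : n ≠ 0 := by omega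
  rw [chord_decomp P hnn hτmem.1 hττ' hτ'mem.2]
  -- matched parameters for the subdivision points
  have hcpt_lb : ∀ q : ℕ, τ ≤ cpt τ τ' n q := fun q =>
    le_min hττ' (le_max_left _ _) |>.trans_eq (congrArg _ rfl) |>.trans_eq rfl
  have hcpt_ub : ∀ q : ℕ, cpt τ τ' n q ≤ τ' := fun q => min_le_left _ _
  set u : ℕ → ℝ := fun q => pick f t1 t2 (cpt τ τ' n q) with hu
  have hu_spec : ∀ q : ℕ, u q ∈ Icc t1 t2 ∧ f (u q) = cpt τ τ' n q := by
    intro q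
    exact pick_spec hf hTmono hT1mem hT2mem (hcpt_lb q) (hcpt_ub q)
  have hu_mem01 : ∀ q : ℕ, u q ∈ Icc (0:ℝ) 1 := by
    intro q
    exact ⟨hT1mem.1.trans (hu_spec q).1.1, (hu_spec q).1.2.trans hT2mem.2⟩
  have hu_mono : ∀ q : ℕ, u q ≤ u (q+1) :=
    fun q => pick_mono hTmono (cpt_mono (by omega)) (hcpt_ub (q+1))
  -- the matched points on edge i of R
  have hgmem : ∀ q : ℕ, ((i:ℝ)-1)/m ≤ g (u q) ∧ g (u q) ≤ (i:ℝ)/m := by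
    intro q
    have h1 : g t1 ≤ g (u q) := hg.2.1 hT1mem (hu_mem01 q) (hu_spec q).1.1
    have h2 : g (u q) ≤ g t2 := hg.2.1 (hu_mem01 q) hT2mem (hu_spec q).1.2
    rw [hT1val] at h1
    rw [hT2val] at h2
    have hc : ((i - 1 : ℕ) : ℝ) = (i:ℝ) - 1 := by
      have := Nat.cast_sub (by omega : 1 ≤ i) (R := ℝ); simpa using this
    rw [hc] at h1
    exact ⟨h1, h2⟩
  set lam : ℕ → ℝ := fun q => g (u q) * m - ((i:ℝ) - 1) with hlam
  have hy : ∀ q : ℕ, curveMap R (g (u q))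
      = (1 - lam q) • R ⟨i-1, by omega⟩ + lam q • R ⟨i, by omega⟩ := by
    intro q
    have hc : ((i - 1 : ℕ) : ℝ) = (i:ℝ) - 1 := by
      have := Nat.cast_sub (by omega : 1 ≤ i) (R := ℝ); simpa using this
    have h1 : ((i-1 : ℕ):ℝ)/m ≤ g (u q) := by rw [hc]; exact (hgmem q).1
    have h2 : g (u q) ≤ (((i-1 : ℕ):ℝ) + 1)/m := by
      rw [hc]
      have : (i:ℝ) - 1 + 1 = (i:ℝ) := by ring
      rw [this]
      exact (hgmem q).2
    obtain ⟨hcm, _⟩ := piece R (by omega : i - 1 < m) h1 h2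
    rw [hcm]
    have hidx : (⟨i-1+1, by omega⟩ : Fin (m+1)) = ⟨i, by omega⟩ :=
      Fin.ext (show i-1+1 = i from by omega)
    rw [hidx, hc, hlam]
  have hlam_mono : ∀ q : ℕ, lam q ≤ lam (q+1) := by
    intro q
    have := hg.2.1 (hu_mem01 q) (hu_mem01 (q+1)) (hu_mono q)
    simp only [hlam]
    nlinarith
  -- per-piece estimate
  have hpiece : ∀ q ∈ Finset.range n,
      dist (curveMap P (cpt τ τ' n q)) (curveMap P (cpt τ τ' n (q+1)))
        ≤ (lam (q+1) - lam q) * dist (R ⟨i-1, by omega⟩) (R ⟨i, by omega⟩) + 2 * Δ' := by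
    intro q _
    have h1 : dist (curveMap P (f (u q))) (curveMap R (g (u q))) ≤ Δ' := hsup _ (hu_mem01 q)
    have h2 : dist (curveMap P (f (u (q+1)))) (curveMap R (g (u (q+1)))) ≤ Δ' :=
      hsup _ (hu_mem01 (q+1))
    rw [(hu_spec q).2] at h1
    rw [(hu_spec (q+1)).2] at h2
    have h3 : dist (curveMap R (g (u q))) (curveMap R (g (u (q+1))))
        = (lam (q+1) - lam q) * dist (R ⟨i-1, by omega⟩) (R ⟨i, by omega⟩) := by
      rw [hy q, hy (q+1)]
      exact dist_combo (hlam_mono q)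
    calc dist (curveMap P (cpt τ τ' n q)) (curveMap P (cpt τ τ' n (q+1)))
        ≤ dist (curveMap P (cpt τ τ' n q)) (curveMap R (g (u q)))
          + dist (curveMap R (g (u q))) (curveMap R (g (u (q+1))))
          + dist (curveMap R (g (u (q+1)))) (curveMap P (cpt τ τ' n (q+1))) :=
            dist_triangle4 _ _ _ _
      _ ≤ Δ' + ((lam (q+1) - lam q) * dist (R ⟨i-1, by omega⟩) (R ⟨i, by omega⟩)) + Δ' := by
          rw [h3]
          gcongr
          rw [dist_comm]
          exact h2
      _ = (lam (q+1) - lam q) * dist (R ⟨i-1, by omega⟩) (R ⟨i, by omega⟩) + 2 * Δ' := by ring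
  -- sum up
  have hsum := Finset.sum_le_sum hpiece
  apply hsum.trans
  rw [Finset.sum_add_distrib, ← Finset.sum_mul, Finset.sum_range_sub (fun q => lam q) n]
  have hlam_n : lam n - lam 0 ≤ 1 := by
    have h1 : g (u 0) ≥ ((i:ℝ)-1)/m := (hgmem 0).1
    have h2 : g (u n) ≤ (i:ℝ)/m := (hgmem n).2
    simp only [hlam]
    have e1 : g (u n) * m ≤ (i:ℝ) := (le_div_iff₀ hm').1 h2
    have e2 : (i:ℝ) - 1 ≤ g (u 0) * m := (div_le_iff₀ hm').1 h1
    linarith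
  have hsc : ∑ _q ∈ Finset.range n, 2 * Δ' = 2 * n * Δ' := by
    rw [Finset.sum_const, Finset.card_range, nsmul_eq_mul]
    ring
  rw [hsc]
  have hd := dist_nonneg (x := R (⟨i-1, by omega⟩ : Fin (m+1))) (y := R ⟨i, by omega⟩)
  nlinarith [hlam_n, hd, hΔ']

/-- Lower bound on the arclength increment of `P` along a matched edge of `R`. -/
lemma sigma_incr_ge (hf : IsRepar f) (hg : IsRepar g)
    (hsup : ∀ t ∈ Icc (0:ℝ) 1, dist (curveMap P (f t)) (curveMap R (g t)) ≤ Δ')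
    {i : ℕ} (hi1 : 1 ≤ i) (him : i ≤ m) :
    dist (R ⟨i-1, by omega⟩) (R ⟨i, by omega⟩) - 2 * Δ'
      ≤ sigma P (f (TT (m := m) g i)) - sigma P (f (TT (m := m) g (i-1))) := by
  obtain ⟨hT1mem, _⟩ := TT_spec (m := m) hg (by omega : i - 1 ≤ m)
  obtain ⟨hT2mem, _⟩ := TT_spec (m := m) hg him
  have hTmono : TT (m := m) g (i-1) ≤ TT (m := m) g i := TT_mono hg (by omega) him
  have hτmem : f (TT (m := m) g (i-1)) ∈ Icc (0:ℝ) 1 := repar_mem hf hT1mem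
  have hτ'mem : f (TT (m := m) g i) ∈ Icc (0:ℝ) 1 := repar_mem hf hT2mem
  have hττ' : f (TT (m := m) g (i-1)) ≤ f (TT (m := m) g i) := hf.2.1 hT1mem hT2mem hTmono
  have hchord := dist_le_sigma P hτmem.1 hττ' hτ'mem.2
  have hv1 := vertex_close hg hsup (by omega : i - 1 ≤ m)
  have hv2 := vertex_close hg hsup him
  have htri := dist_triangle4 (R ⟨i-1, by omega⟩) (curveMap P (f (TT (m := m) g (i-1))))
    (curveMap P (f (TT (m := m) g i))) (R ⟨i, by omega⟩)
  rw [dist_comm (R ⟨i-1, by omega⟩) (curveMap P (f (TT (m := m) g (i-1))))] at htri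
  linarith

end Matched

end DBound
namespace DBound

variable {d n m : ℕ}

lemma isRepar_id : IsRepar (id : ℝ → ℝ) :=
  ⟨continuousOn_id, fun _ _ _ _ h => h, image_id _⟩

lemma frechet_mem_nonneg {X Y : ℝ → Euc d} {r : ℝ}
    (hr : r ∈ { r : ℝ | ∃ f g : ℝ → ℝ, IsRepar f ∧ IsRepar g ∧
      ∀ t ∈ Icc (0 : ℝ) 1, dist (X (f t)) (Y (g t)) ≤ r }) : 0 ≤ r := by
  obtain ⟨f, g, _, _, hb⟩ := hr
  have := hb 0 (by constructor <;> norm_num)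
  exact le_trans dist_nonneg this

lemma frechetDist_le_of_bound {X Y : ℝ → Euc d} {c : ℝ}
    (hb : ∀ t ∈ Icc (0 : ℝ) 1, dist (X t) (Y t) ≤ c) :
    frechetDist X Y ≤ c := by
  apply csInf_le ⟨0, fun r hr => frechet_mem_nonneg hr⟩
  exact ⟨id, id, isRepar_id, isRepar_id, hb⟩

lemma dist_combo_le {A B A' B' : Euc d} {lam c : ℝ} (h0 : 0 ≤ lam) (h1 : lam ≤ 1)
    (hA : dist A A' ≤ c) (hB : dist B B' ≤ c) :
    dist ((1-lam) • A + lam • B) ((1-lam) • A' + lam • B') ≤ c := by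
  have hdiff : ((1-lam) • A + lam • B) - ((1-lam) • A' + lam • B')
      = (1-lam) • (A - A') + lam • (B - B') := by module
  rw [dist_eq_norm, hdiff]
  calc ‖(1-lam) • (A - A') + lam • (B - B')‖
      ≤ ‖(1-lam) • (A - A')‖ + ‖lam • (B - B')‖ := norm_add_le _ _
    _ = (1-lam) * ‖A - A'‖ + lam * ‖B - B'‖ := by
        rw [norm_smul, norm_smul, Real.norm_of_nonneg (by linarith), Real.norm_of_nonneg h0]
    _ ≤ (1-lam) * c + lam * c := by
        have e1 : ‖A - A'‖ ≤ c := by rwa [← dist_eq_norm]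
        have e2 : ‖B - B'‖ ≤ c := by rwa [← dist_eq_norm]
        have f1 := mul_le_mul_of_nonneg_left e1 (by linarith : (0:ℝ) ≤ 1 - lam)
        have f2 := mul_le_mul_of_nonneg_left e2 h0
        linarith
    _ = c := by ring

/-- If all corresponding vertices are within `c`, the Fréchet distance is at most `c`. -/
lemma frechet_le_of_vertex_close {R R' : Fin (m + 1) → Euc d} {c : ℝ}
    (h : ∀ i : Fin (m+1), dist (R i) (R' i) ≤ c) :
    frechetDist (curveMap R) (curveMap R') ≤ c := by
  apply frechetDist_le_of_bound
  intro t ht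
  rcases Nat.eq_zero_or_pos m with hm | hm
  · subst hm
    rw [curveMap, dif_pos rfl, curveMap, dif_pos rfl]
    exact h 0
  -- find the edge containing t
  have hm' : (0:ℝ) < m := by exact_mod_cast hm
  set q := min ⌊t * (m:ℝ)⌋₊ (m - 1) with hq
  have hqm : q < m := by omega
  have ht0 : 0 ≤ t * m := mul_nonneg ht.1 hm'.le
  have hlb : (q:ℝ)/m ≤ t := by
    rw [div_le_iff₀ hm']
    rcases le_or_gt ⌊t * (m:ℝ)⌋₊ (m-1) with hc | hc
    · have : q = ⌊t * (m:ℝ)⌋₊ := by omega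
      rw [this]
      exact Nat.floor_le ht0
    · have hqe : q = m - 1 := by omega
      have h2 : (m : ℝ) ≤ t * m := by
        have : (m : ℕ) ≤ ⌊t * (m:ℝ)⌋₊ := by omega
        calc (m:ℝ) ≤ (⌊t * (m:ℝ)⌋₊ : ℝ) := by exact_mod_cast this
          _ ≤ t * m := Nat.floor_le ht0
      have : ((q:ℕ):ℝ) ≤ (m:ℝ) := by exact_mod_cast (by omega : q ≤ m)
      linarith
  have hub : t ≤ ((q:ℝ)+1)/m := by
    rw [le_div_iff₀ hm']
    rcases le_or_gt ⌊t * (m:ℝ)⌋₊ (m-1) with hc | hc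
    · have hqe : q = ⌊t * (m:ℝ)⌋₊ := by omega
      have := Nat.lt_floor_add_one (t * (m:ℝ))
      rw [← hqe] at this
      linarith
    · have h2 : t * m ≤ m := by nlinarith [ht.2]
      have : (m:ℝ) ≤ (q:ℝ)+1 := by
        have : m ≤ q + 1 := by omega
        exact_mod_cast this
      linarith
  obtain ⟨hcR, _⟩ := piece R hqm hlb hub
  obtain ⟨hcR', _⟩ := piece R' hqm hlb hub
  rw [hcR, hcR']
  have hl0 : 0 ≤ t * m - q := by
    rw [div_le_iff₀ hm'] at hlb; linarith
  have hl1 : t * m - q ≤ 1 := by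
    rw [le_div_iff₀ hm'] at hub; linarith
  exact dist_combo_le hl0 hl1 (h _) (h _)

/-- Extract a matching witnessing nearly the Fréchet distance. -/
lemma frechet_extract (P : Fin (n + 1) → Euc d) (R : Fin (m + 1) → Euc d) {Δ Δ' : ℝ}
    (hΔΔ' : Δ < Δ') (hfd : frechetDist (curveMap P) (curveMap R) ≤ Δ) :
    ∃ f g : ℝ → ℝ, IsRepar f ∧ IsRepar g ∧
      ∀ t ∈ Icc (0:ℝ) 1, dist (curveMap P (f t)) (curveMap R (g t)) ≤ Δ' := by
  set S := { r : ℝ | ∃ f g : ℝ → ℝ, IsRepar f ∧ IsRepar g ∧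
    ∀ t ∈ Icc (0 : ℝ) 1, dist (curveMap P (f t)) (curveMap R (g t)) ≤ r } with hS
  have hSne : S.Nonempty := by
    refine ⟨csum P n + dist (curveMap P 0) (curveMap R 0) + csum R m, id, id,
      isRepar_id, isRepar_id, ?_⟩
    intro t ht
    simp only [id_eq]
    calc dist (curveMap P t) (curveMap R t)
        ≤ dist (curveMap P t) (curveMap P 0) + dist (curveMap P 0) (curveMap R 0)
          + dist (curveMap R 0) (curveMap R t) := dist_triangle4 _ _ _ _
      _ ≤ csum P n + dist (curveMap P 0) (curveMap R 0) + csum R m := by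
          gcongr
          · rw [dist_comm]; exact dist_curveMap_vertex0 P ht
          · exact dist_curveMap_vertex0 R ht
  by_contra hcon
  push_neg at hcon
  have hlb : Δ' ≤ sInf S := by
    apply le_csInf hSne
    intro r hr
    obtain ⟨f, g, hf, hg, hb⟩ := hr
    by_contra hr'
    push_neg at hr'
    obtain ⟨t, ht, hgt⟩ := hcon f g hf hg
    have := hb t ht
    linarith
  rw [frechetDist] at hfd
  have : sInf S ≤ Δ := hfd
  linarith

end DBound
namespace DBound

variable {d n m : ℕ}

lemma TT_zero {g : ℝ → ℝ} (hg : IsRepar g) : TT (m := m) g 0 = 0 := by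
  rw [TT]
  apply le_antisymm
  · apply csInf_le ⟨0, fun t ht => ht.1.1⟩
    refine ⟨⟨le_rfl, zero_le_one⟩, ?_⟩
    rw [repar_zero hg]
    simp
  · exact le_csInf ⟨1, ⟨zero_le_one, le_rfl⟩, by rw [repar_one hg]; simp⟩
      (fun t ht => ht.1.1)

/-- A polygonal curve as a dependent pair. -/
abbrev Curve (d : ℕ) := Σ m' : ℕ, Fin (m' + 1) → Euc d

/-- `i`-th vertex (clamped). -/
def vtx {m : ℕ} (R : Fin (m + 1) → Euc d) (i : ℕ) : Euc d := R ⟨min i m, by omega⟩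

lemma vtx_eq {m : ℕ} (R : Fin (m + 1) → Euc d) {i : ℕ} (hi : i ≤ m) (h' : i < m + 1) :
    vtx R i = R ⟨i, h'⟩ := by
  have h2 : (⟨min i m, by omega⟩ : Fin (m + 1)) = ⟨i, h'⟩ := by
    apply Fin.ext
    simpa using min_eq_left hi
  rw [vtx, h2]

/-- discretized arclength of the matched points -/
noncomputable def sArr {d n : ℕ} (P : Fin (n+1) → Euc d) (Δ : ℝ) (f : ℝ → ℝ) (mm : ℕ)
    (g : ℝ → ℝ) (i : ℕ) : ℕ :=
  ⌊8 * sigma P (f (TT (m := mm) g i)) / Δ⌋₊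

/-- The data record used to classify curves near `P`. -/
abbrev DataT (d k μ : ℕ) (net : Finset (Euc d)) :=
  Fin k × (Fin k → Fin (μ + 1) × Fin (64 * k) × {y // y ∈ net})

/-- The classification predicate. -/
def GoodP {d n : ℕ} (k μ : ℕ) (P : Fin (n+1) → Euc d) (ε Δ : ℝ) (net : Finset (Euc d))
    (δ : DataT d k μ net) (m : ℕ) (R : Fin (m + 1) → Euc d) : Prop :=
  m + 1 ≤ k ∧ IsMuEpsEdges R μ ε ∧ (δ.1 : ℕ) = m ∧
  ∃ f g : ℝ → ℝ, IsRepar f ∧ IsRepar g ∧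
    (∀ t ∈ Icc (0:ℝ) 1, dist (curveMap P (f t)) (curveMap R (g t)) ≤ 9/8 * Δ) ∧
    (∀ j : ℕ, j + 1 ≤ m → ∀ hjk : j < k,
      (((δ.2 ⟨j, hjk⟩).1 : ℕ) : ℝ) * ε = dist (vtx R j) (vtx R (j+1))) ∧
    (∀ j : ℕ, j + 1 ≤ m → ∀ hjk : j < k,
      ((δ.2 ⟨j, hjk⟩).2.1 : ℕ)
          + (sArr P Δ f m g j + ⌊8 * ((((δ.2 ⟨j, hjk⟩).1 : ℕ) : ℝ) * ε) / Δ⌋₊)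
        = sArr P Δ f m g (j+1) + 32) ∧
    (∀ j : ℕ, j ≤ m → ∀ hjk : j < k,
      dist (vtx R j - curveMap P (f (TT (m := m) g j))) ((δ.2 ⟨j, hjk⟩).2.2 : Euc d) ≤ Δ/16)

lemma sArr_zero {P : Fin (n+1) → Euc d} {Δ : ℝ} {f g : ℝ → ℝ} {mm : ℕ}
    (hf : IsRepar f) (hg : IsRepar g) : sArr P Δ f mm g 0 = 0 := by
  rw [sArr, TT_zero hg, repar_zero hf, sigma_zero]
  norm_num

/-- Two curves classified with the same data are Fréchet-close. -/
lemma good_close {k μ : ℕ} {P : Fin (n+1) → Euc d} {ε Δ : ℝ} (hΔ : 0 < Δ)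
    {net : Finset (Euc d)} {δ : DataT d k μ net} {mx mx' : ℕ}
    {R : Fin (mx + 1) → Euc d} {R' : Fin (mx' + 1) → Euc d}
    (hx : GoodP k μ P ε Δ net δ mx R) (hx' : GoodP k μ P ε Δ net δ mx' R') :
    frechetDist (curveMap R) (curveMap R') ≤ Δ / 2 := by
  obtain ⟨hk1, _, hδ1, f, g, hf, hg, hsup, hlen, hsenc, hlat⟩ := hx
  obtain ⟨hk1', _, hδ1', f', g', hf', hg', hsup', hlen', hsenc', hlat'⟩ := hx'
  have hmm : mx = mx' := by omega
  subst hmm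
  -- equality of the discretized arclengths
  have hs : ∀ j, j ≤ mx → sArr P Δ f mx g j = sArr P Δ f' mx g' j := by
    intro j
    induction j with
    | zero => intro _; rw [sArr_zero hf hg, sArr_zero hf' hg']
    | succ j ih =>
      intro hj
      have hjk : j < k := by omega
      have e1 := hsenc j (by omega) hjk
      have e2 := hsenc' j (by omega) hjk
      have e3 := ih (by omega)
      omega
  -- vertexwise closeness
  have hvert : ∀ i : Fin (mx + 1), dist (R i) (R' i) ≤ Δ/4 := by
    intro i
    have hjm : (i : ℕ) ≤ mx := Nat.lt_succ_iff.mp i.isLt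
    have hjk : (i : ℕ) < k := by omega
    -- arclength of matched points close
    have hσmem : f (TT (m := mx) g i) ∈ Icc (0:ℝ) 1 :=
      repar_mem hf (TT_spec hg hjm).1
    have hσmem' : f' (TT (m := mx) g' i) ∈ Icc (0:ℝ) 1 :=
      repar_mem hf' (TT_spec hg' hjm).1
    set a := sigma P (f (TT (m := mx) g i)) with ha
    set b := sigma P (f' (TT (m := mx) g' i)) with hb
    have ha0 : 0 ≤ a := sigma_nonneg P hσmem
    have hb0 : 0 ≤ b := sigma_nonneg P hσmem'
    have hse := hs i hjm
    have hfa1 : ((sArr P Δ f mx g i : ℕ) : ℝ) ≤ 8 * a / Δ := by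
      rw [sArr]
      exact Nat.floor_le (by positivity)
    have hfa2 : 8 * a / Δ < ((sArr P Δ f mx g i : ℕ) : ℝ) + 1 := by
      rw [sArr]
      exact Nat.lt_floor_add_one _
    have hfb1 : ((sArr P Δ f' mx g' i : ℕ) : ℝ) ≤ 8 * b / Δ := by
      rw [sArr]
      exact Nat.floor_le (by positivity)
    have hfb2 : 8 * b / Δ < ((sArr P Δ f' mx g' i : ℕ) : ℝ) + 1 := by
      rw [sArr]
      exact Nat.lt_floor_add_one _
    rw [hse] at hfa1 hfa2
    have habs : |b - a| ≤ Δ/8 := by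
      have h1 : (-1 : ℝ) < (8 * b - 8 * a) / Δ := by
        rw [← div_sub_div_same]; linarith
      have h2 : (8 * b - 8 * a) / Δ < 1 := by
        rw [← div_sub_div_same]; linarith
      have h1' : (-1 : ℝ) * Δ < 8 * b - 8 * a := (lt_div_iff₀ hΔ).1 h1
      have h2' : 8 * b - 8 * a < 1 * Δ := (div_lt_iff₀ hΔ).1 h2
      rw [abs_le]
      constructor <;> linarith
    have hPP : dist (curveMap P (f (TT (m := mx) g i))) (curveMap P (f' (TT (m := mx) g' i)))
        ≤ Δ/8 := by
      have := dist_le_abs_sigma P hσmem hσmem'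
      rw [← hb, ← ha] at this
      exact this.trans habs
    -- lateral
    have hl := hlat i hjm hjk
    have hl' := hlat' i hjm hjk
    set y := ((δ.2 ⟨(i:ℕ), hjk⟩).2.2 : Euc d)
    set Pτ := curveMap P (f (TT (m := mx) g i))
    set Pτ' := curveMap P (f' (TT (m := mx) g' i))
    have hveq : vtx R (i:ℕ) = R i := by
      rw [vtx_eq R hjm (Nat.lt_succ_of_le hjm)]
    have hveq' : vtx R' (i:ℕ) = R' i := by
      rw [vtx_eq R' hjm (Nat.lt_succ_of_le hjm)]
    rw [hveq] at hl
    rw [hveq'] at hl'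
    have hdec : R i - R' i = ((R i - Pτ) - y) - ((R' i - Pτ') - y) + (Pτ - Pτ') := by abel
    calc dist (R i) (R' i) = ‖R i - R' i‖ := dist_eq_norm _ _
      _ = ‖((R i - Pτ) - y) - ((R' i - Pτ') - y) + (Pτ - Pτ')‖ := by rw [hdec]
      _ ≤ ‖((R i - Pτ) - y) - ((R' i - Pτ') - y)‖ + ‖Pτ - Pτ'‖ := norm_add_le _ _
      _ ≤ ‖(R i - Pτ) - y‖ + ‖(R' i - Pτ') - y‖ + ‖Pτ - Pτ'‖ := by
          have := norm_sub_le ((R i - Pτ) - y) ((R' i - Pτ') - y)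
          linarith
      _ ≤ Δ/16 + Δ/16 + Δ/8 := by
          gcongr
          · rw [← dist_eq_norm]; exact hl
          · rw [← dist_eq_norm]; exact hl'
          · rw [← dist_eq_norm]; exact hPP
      _ = Δ/4 := by ring
  have := frechet_le_of_vertex_close hvert
  linarith

end DBound
namespace DBound

variable {d n : ℕ}

lemma good_exists {k μ m : ℕ} {ε Δ : ℝ} (hε : 0 < ε) (hΔ : 0 < Δ)
    (P : Fin (n+1) → Euc d) (hnk : n + 1 ≤ k)
    {net : Finset (Euc d)}
    (hcov : ∀ w : Euc d, ‖w‖ ≤ 9/4*Δ → ∃ y ∈ net, dist w y ≤ Δ/16)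
    (R : Fin (m+1) → Euc d) (hmk : m + 1 ≤ k) (hRμ : IsMuEpsEdges R μ ε)
    (hfre : frechetDist (curveMap P) (curveMap R) ≤ Δ) :
    ∃ δ : DataT d k μ net, GoodP k μ P ε Δ net δ m R := by
  classical
  obtain ⟨f, g, hf, hg, hsup⟩ :=
    frechet_extract P R (show Δ < 9/8*Δ by linarith) hfre
  -- edge lengths (chosen totally)
  have hlen0 : ∀ j : ℕ, ∃ mj : ℕ, mj ≤ μ ∧
      (j + 1 ≤ m → ((mj : ℝ)) * ε = dist (vtx R j) (vtx R (j+1))) := by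
    intro j
    by_cases hj : j + 1 ≤ m
    · have hjlt : j < m := hj
      obtain ⟨mj, hmj⟩ := (hRμ ⟨j, hjlt⟩).1
      have hub := (hRμ ⟨j, hjlt⟩).2
      have e1 : R (Fin.castSucc ⟨j, hjlt⟩) = R ⟨j, by omega⟩ :=
        congrArg R (Fin.ext (by simp))
      have e2 : R (Fin.succ ⟨j, hjlt⟩) = R ⟨j+1, by omega⟩ :=
        congrArg R (Fin.ext (by simp))
      rw [e1, e2] at hmj hub
      refine ⟨mj, ?_, fun _ => ?_⟩
      · have h2 : (mj:ℝ) * ε ≤ (μ:ℝ) * ε := by rw [← hmj]; exact hub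
        have h3 : (mj:ℝ) ≤ (μ:ℝ) := le_of_mul_le_mul_right h2 hε
        exact_mod_cast h3
      · rw [vtx_eq R (by omega : j ≤ m) (show j < m + 1 by omega),
          vtx_eq R (by omega : j + 1 ≤ m) (show j + 1 < m + 1 by omega)]
        exact hmj.symm
    · exact ⟨0, by omega, fun h => absurd h hj⟩
  choose mi hmi1 hmi2 using hlen0
  -- abbreviations
  set sA : ℕ → ℕ := sArr P Δ f m g with hsA
  set fl : ℕ → ℕ := fun j => ⌊8 * (((mi j : ℕ) : ℝ) * ε) / Δ⌋₊ with hfldef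
  -- window facts
  have key : ∀ j : ℕ, j + 1 ≤ m →
      sA j + fl j ≤ sA (j+1) + 32 ∧
      sA (j+1) < sA j + fl j + 2 + 18 * (n+1) := by
    intro j hj
    set a := sigma P (f (TT (m := m) g j)) with hadef
    set b := sigma P (f (TT (m := m) g (j+1))) with hbdef
    set L := ((mi j : ℕ) : ℝ) * ε with hLdef
    have hL0 : 0 ≤ L := by positivity
    have ha0 : 0 ≤ a :=
      sigma_nonneg P (repar_mem hf (TT_spec hg (by omega : j ≤ m)).1)
    have hb0 : 0 ≤ b :=
      sigma_nonneg P (repar_mem hf (TT_spec hg (by omega : j + 1 ≤ m)).1)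
    have hLd : L = dist (R ⟨(j+1)-1, by omega⟩) (R ⟨j+1, by omega⟩) := by
      rw [hLdef, hmi2 j hj, vtx_eq R (by omega : j ≤ m) (show j < m + 1 by omega),
        vtx_eq R (by omega : j + 1 ≤ m) (show j + 1 < m + 1 by omega)]
      exact rfl
    have hge' := sigma_incr_ge (P := P) (R := R) (Δ' := 9/8*Δ) hf hg hsup
      (by omega : 1 ≤ j + 1) (by omega : j + 1 ≤ m)
    have hle' := sigma_incr_le (P := P) (R := R) (Δ' := 9/8*Δ) hf hg (by linarith)
      hsup (by omega : 1 ≤ j + 1) (by omega : j + 1 ≤ m)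
    rw [← hLd] at hge' hle'
    have hred : (j + 1) - 1 = j := rfl
    rw [hred] at hge' hle'
    rw [← hadef, ← hbdef] at hge' hle'
    -- floor bounds, multiplied out
    have A1 : ((sA j : ℕ) : ℝ) * Δ ≤ 8 * a := by
      rw [hsA, sArr, ← hadef]
      exact (le_div_iff₀ hΔ).1 (Nat.floor_le (by positivity))
    have A2 : 8 * a < (((sA j : ℕ) : ℝ) + 1) * Δ := by
      rw [hsA, sArr, ← hadef]
      exact (div_lt_iff₀ hΔ).1 (Nat.lt_floor_add_one _)
    have B1 : ((sA (j+1) : ℕ) : ℝ) * Δ ≤ 8 * b := by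
      rw [hsA, sArr, ← hbdef]
      exact (le_div_iff₀ hΔ).1 (Nat.floor_le (by positivity))
    have B2 : 8 * b < (((sA (j+1) : ℕ) : ℝ) + 1) * Δ := by
      rw [hsA, sArr, ← hbdef]
      exact (div_lt_iff₀ hΔ).1 (Nat.lt_floor_add_one _)
    have C1 : ((fl j : ℕ) : ℝ) * Δ ≤ 8 * L := by
      rw [hfldef]
      exact (le_div_iff₀ hΔ).1 (Nat.floor_le (by positivity))
    have C2 : 8 * L < (((fl j : ℕ) : ℝ) + 1) * Δ := by
      rw [hfldef]
      exact (div_lt_iff₀ hΔ).1 (Nat.lt_floor_add_one _)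
    constructor
    · have M1 : (((sA j : ℕ) : ℝ) + ((fl j : ℕ) : ℝ)) * Δ
          < ((((sA (j+1) : ℕ)) : ℝ) + 19) * Δ := by nlinarith
      have E1 : ((sA j : ℕ) : ℝ) + ((fl j : ℕ) : ℝ) < (((sA (j+1)) : ℕ) : ℝ) + 19 :=
        lt_of_mul_lt_mul_right M1 hΔ.le
      have : sA j + fl j < sA (j+1) + 19 := by exact_mod_cast E1
      omega
    · have M2 : (((sA (j+1) : ℕ)) : ℝ) * Δ
          < ((((sA j : ℕ)) : ℝ) + ((fl j : ℕ) : ℝ) + 2 + 18 * ((n:ℝ)+1)) * Δ := by nlinarith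
      have E2 : (((sA (j+1) : ℕ)) : ℝ)
          < (((sA j : ℕ)) : ℝ) + ((fl j : ℕ) : ℝ) + 2 + 18 * ((n:ℝ)+1) :=
        lt_of_mul_lt_mul_right M2 hΔ.le
      exact_mod_cast E2
  -- default net element
  have hy0 : ∃ y ∈ net, dist (0 : Euc d) y ≤ Δ/16 := hcov 0 (by simp; positivity)
  -- lateral choices (total)
  have hlatw : ∀ j : ℕ, ∃ y : Euc d, y ∈ net ∧
      (j ≤ m → dist (vtx R j - curveMap P (f (TT (m := m) g j))) y ≤ Δ/16) := by
    intro j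
    by_cases hj : j ≤ m
    · have hb : ‖vtx R j - curveMap P (f (TT (m := m) g j))‖ ≤ 9/4*Δ := by
        have hveq : vtx R j = R ⟨j, show j < m + 1 by omega⟩ :=
          vtx_eq R hj (show j < m + 1 by omega)
        rw [hveq, ← dist_eq_norm, dist_comm]
        have hv := vertex_close (P := P) (R := R) hg hsup hj
        calc dist (curveMap P (f (TT (m := m) g j))) (R ⟨j, show j < m + 1 by omega⟩)
            ≤ 9/8*Δ := hv
          _ ≤ 9/4*Δ := by linarith
      obtain ⟨y, hy1, hy2⟩ := hcov _ hb
      exact ⟨y, hy1, fun _ => hy2⟩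
    · obtain ⟨y, hy1, _⟩ := hy0
      exact ⟨y, hy1, fun h => absurd h hj⟩
  choose lat hlat1 hlat2 using hlatw
  -- build the data
  refine ⟨⟨⟨m, by omega⟩, fun j =>
    (⟨mi j, Nat.lt_succ_of_le (hmi1 j)⟩,
     if h : (j : ℕ) + 1 ≤ m then
       ⟨sA ((j:ℕ)+1) + 32 - (sA j + fl j), by
          have h1 := (key j h).1
          have h2 := (key j h).2
          omega⟩
     else ⟨0, by omega⟩,
     ⟨lat j, hlat1 j⟩)⟩, ?_⟩
  refine ⟨hmk, hRμ, rfl, f, g, hf, hg, hsup, ?_, ?_, ?_⟩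
  · intro j hj hjk
    exact hmi2 j hj
  · intro j hj hjk
    simp only [dif_pos hj]
    have h1 := (key j hj).1
    have h2 := (key j hj).2
    simp only [hsA, hfldef] at h1 h2 ⊢
    omega
  · intro j hj hjk
    exact hlat2 j hj

end DBound

namespace DBound

lemma card_bound {d k μ : ℕ} (hd : 1 ≤ d) (hk : 1 ≤ k) (hμ : 1 ≤ μ)
    (net : Finset (Euc d)) (hnet : net.card ≤ 16384 ^ d) :
    Fintype.card (DataT d k μ net) ≤ (2 ^ (32 * d) * k * μ) ^ k := by
  classical
  have hcard : Fintype.card (DataT d k μ net)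
      = k * ((μ + 1) * ((64 * k) * net.card)) ^ k := by
    rw [Fintype.card_prod, Fintype.card_fun]
    simp [Fintype.card_fin, Fintype.card_coe, Fintype.card_prod]
  rw [hcard]
  have h16 : (16384 : ℕ) = 2 ^ 14 := by norm_num
  have hinner : (μ + 1) * ((64 * k) * net.card) ≤ 2 ^ (14 * d + 7) * k * μ := by
    calc (μ + 1) * ((64 * k) * net.card)
        ≤ (2 * μ) * ((64 * k) * 2 ^ (14 * d)) := by
          apply Nat.mul_le_mul
          · omega
          · apply Nat.mul_le_mul_left
            rw [h16, ← pow_mul] at hnet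
            exact hnet
      _ = 2 ^ (14 * d + 7) * k * μ := by ring
  calc k * ((μ + 1) * ((64 * k) * net.card)) ^ k
      ≤ 2 ^ k * (2 ^ (14 * d + 7) * k * μ) ^ k := by
        apply Nat.mul_le_mul
        · exact (Nat.lt_two_pow_self (n := k)).le
        · exact Nat.pow_le_pow_left hinner k
    _ = (2 * (2 ^ (14 * d + 7) * k * μ)) ^ k := (mul_pow 2 _ k).symm
    _ ≤ (2 ^ (32 * d) * k * μ) ^ k := by
        apply Nat.pow_le_pow_left
        have h5 : 2 * (2 ^ (14 * d + 7) * k * μ) = 2 ^ (14 * d + 8) * k * μ := by ring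
        rw [h5]
        have hpow : (2:ℕ) ^ (14 * d + 8) ≤ 2 ^ (32 * d) :=
          Nat.pow_le_pow_right (by norm_num) (by omega)
        exact Nat.mul_le_mul (Nat.mul_le_mul_right _ hpow) le_rfl

end DBound


/-- Theorem 3.6 of the paper. There is a universal constant `C₀ ≥ 1` such
that every Fréchet ball of radius `Δ` centered at a `(μ,ε)`-curve of complexity at most `k`
in `ℝ^d` can be covered by at most `(C₀^d·k·μ)^k` Fréchet balls of radius `Δ/2` centered at
`(μ,ε)`-curves; hence the doubling dimension of this space is `O(k(d + log(kμ)))`. -/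
theorem doubling_bound :
    ∃ C₀ : ℝ, 1 ≤ C₀ ∧
      ∀ (d k μ : ℕ), 1 ≤ d → 1 ≤ k → 1 ≤ μ →
      ∀ ε : ℝ, 0 < ε →
      ∀ (n : ℕ) (P : Fin (n + 1) → Euc d), n + 1 ≤ k → IsMuEpsEdges P μ ε →
      ∀ Δ : ℝ, 0 < Δ →
      ∃ (M : ℕ) (Q : Fin M → Σ m : ℕ, Fin (m + 1) → Euc d),
        (M : ℝ) ≤ (C₀ ^ d * k * μ) ^ k ∧
        (∀ i, (Q i).1 + 1 ≤ k ∧ IsMuEpsEdges (Q i).2 μ ε) ∧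
        ∀ (m : ℕ) (R : Fin (m + 1) → Euc d), m + 1 ≤ k → IsMuEpsEdges R μ ε →
          frechetDist (curveMap P) (curveMap R) ≤ Δ →
          ∃ i, frechetDist (curveMap R) (curveMap (Q i).2) ≤ Δ / 2 := by
  
  classical
  refine ⟨(2:ℝ)^32, by norm_num, ?_⟩
  intro d k μ hd hk hμ ε hε n P hnk hPμ Δ hΔ
  obtain ⟨net, hnetcard, hnetcov⟩ := DBound.exists_ball_net (d := d) Δ hΔ
  set M := Fintype.card (DBound.DataT d k μ net) with hM
  set e : Fin M ≃ DBound.DataT d k μ net := (Fintype.equivFin _).symm with he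
  have hQall : ∀ δ' : DBound.DataT d k μ net, ∃ x : DBound.Curve d,
      (x.1 + 1 ≤ k ∧ IsMuEpsEdges x.2 μ ε) ∧
      ∀ (m : ℕ) (R : Fin (m+1) → Euc d), DBound.GoodP k μ P ε Δ net δ' m R →
        frechetDist (curveMap R) (curveMap x.2) ≤ Δ / 2 := by
    intro δ'
    by_cases h : ∃ x : DBound.Curve d, DBound.GoodP k μ P ε Δ net δ' x.1 x.2
    · obtain ⟨x, hx⟩ := h
      refine ⟨x, ⟨hx.1, hx.2.1⟩, ?_⟩
      intro m R hR
      exact DBound.good_close hΔ hR hx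
    · refine ⟨⟨0, fun _ => P 0⟩, ⟨show 0 + 1 ≤ k by omega, fun i0 => Fin.elim0 i0⟩, ?_⟩
      intro m R hR
      exact absurd ⟨⟨m, R⟩, hR⟩ h
  choose Qf hQf1 hQf2 using hQall
  refine ⟨M, fun i => Qf (e i), ?_, fun i => hQf1 (e i), ?_⟩
  · -- cardinality bound
    have h1 := DBound.card_bound hd hk hμ net hnetcard
    rw [← hM] at h1
    calc (M : ℝ) ≤ (((2 ^ (32 * d) * k * μ) ^ k : ℕ) : ℝ) := by exact_mod_cast h1
      _ = (((2:ℝ)^32) ^ d * k * μ) ^ k := by push_cast; rw [← pow_mul]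
  · -- covering property
    intro m R hmk hRμ hfre
    obtain ⟨δ, hδ⟩ := DBound.good_exists hε hΔ P hnk hnetcov R hmk hRμ hfre
    refine ⟨e.symm δ, ?_⟩
    apply hQf2 (e (e.symm δ)) m R
    rw [e.apply_symm_apply]
    exact hδ
end
end
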